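/- arXiv:1908.09978 — 7 statements merged into one kernel-verified Lean document; each statement's English description precedes it below -/
import Mathlib

section
/- Let K be an algebraically closed field of characteristic zero, let n ≥ 4 and 2 ≤ r ≤ n−2, and let a_1, …, a_r and b_1, …, b_{n−r} be nonnegative integers. Then for every r × (n−r) matrix P over K[x,y] whose (i,j) entry is homogeneous of degree a_i + b_j, there exist an r × n matrix A over K[x,y] whose (i,j) entry is homogeneous of degree a_i and an n × (n−r) matrix B over K[x,y] whose (i,j) entry is homogeneous of degree b_j, such that P = A · B. (Surjectivity of the multiplication map Φ : Hom(K, O^{⊕n}) × Hom(O^{⊕n}, E) → Hom(K, E), where E = ⊕_i O_{P^1}(a_i) and K = ⊕_j O_{P^1}(−b_j), expressed in matrix form.) -/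
open MvPolynomial

lemma deg_two (d : Fin 2 →₀ ℕ) : d.degree = d 0 + d 1 := by
  rw [Finsupp.degree, ← Fin.sum_univ_two (f := fun i => d i)]
  exact Finset.sum_subset (Finset.subset_univ _) (by
    intro x _ hx
    simpa using Finsupp.notMem_support_iff.mp hx)

lemma key {K : Type*} [CommRing K] (a b : ℕ) (p : MvPolynomial (Fin 2) K)
    (hp : p.IsHomogeneous (a + b)) :
    ∃ c d : MvPolynomial (Fin 2) K, c.IsHomogeneous b ∧ d.IsHomogeneous a ∧
      p = X 0 ^ a * c + d * X 1 ^ b := by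
  classical
  have hdeg : ∀ m ∈ p.support, m 0 + m 1 = a + b := by
    intro m hm
    have := hp (MvPolynomial.mem_support_iff.mp hm)
    rw [Pi.one_def, ← Finsupp.degree_eq_weight_one] at this
    rw [← deg_two]; exact this
  set s₁ := p.support.filter (fun m => a ≤ m 0) with hs₁
  set s₂ := p.support.filter (fun m => ¬ a ≤ m 0) with hs₂
  refine ⟨∑ m ∈ s₁, monomial (m - Finsupp.single 0 a) (coeff m p),
          ∑ m ∈ s₂, monomial (m - Finsupp.single 1 b) (coeff m p), ?_, ?_, ?_⟩
  · apply IsHomogeneous.sum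
    intro m hm
    apply isHomogeneous_monomial
    obtain ⟨hm, hma⟩ := Finset.mem_filter.mp hm
    have h := hdeg m hm
    rw [deg_two]
    have h0 : ((m - Finsupp.single 0 a) : Fin 2 →₀ ℕ) 0 = m 0 - a := by
      simp [Finsupp.tsub_apply]
    have h1 : ((m - Finsupp.single 0 a) : Fin 2 →₀ ℕ) 1 = m 1 := by
      simp [Finsupp.tsub_apply]
    omega
  · apply IsHomogeneous.sum
    intro m hm
    apply isHomogeneous_monomial
    obtain ⟨hm, hma⟩ := Finset.mem_filter.mp hm
    have h := hdeg m hm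
    rw [deg_two]
    have h0 : ((m - Finsupp.single 1 b) : Fin 2 →₀ ℕ) 0 = m 0 := by
      simp [Finsupp.tsub_apply]
    have h1 : ((m - Finsupp.single 1 b) : Fin 2 →₀ ℕ) 1 = m 1 - b := by
      simp [Finsupp.tsub_apply]
    omega
  · rw [Finset.mul_sum, Finset.sum_mul]
    have e1 : ∀ m ∈ s₁, X (0 : Fin 2) ^ a * monomial (m - Finsupp.single 0 a) (coeff m p)
        = monomial m (coeff m p) := by
      intro m hm
      obtain ⟨hm, hma⟩ := Finset.mem_filter.mp hm
      rw [X_pow_eq_monomial, monomial_mul, one_mul,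
        add_tsub_cancel_of_le (Finsupp.single_le_iff.mpr hma)]
    have e2 : ∀ m ∈ s₂, monomial (m - Finsupp.single 1 b) (coeff m p) * X (1 : Fin 2) ^ b
        = monomial m (coeff m p) := by
      intro m hm
      obtain ⟨hm, hma⟩ := Finset.mem_filter.mp hm
      have hb : b ≤ m 1 := by have := hdeg m hm; omega
      rw [X_pow_eq_monomial, monomial_mul, mul_one, tsub_add_cancel_of_le ?_]
      · exact Finsupp.single_le_iff.mpr hb
    rw [Finset.sum_congr rfl e1, Finset.sum_congr rfl e2,
      Finset.sum_filter_add_sum_filter_not, support_sum_monomial_coeff]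

/-- surjectivity of the composition map
`Φ : Hom(K, O^{⊕n}) × Hom(O^{⊕n}, E) → Hom(K, E)` in matrix form:
every `r × (n-r)` matrix `P` over `K[x,y]` with `(i,j)` entry homogeneous of
degree `a_i + b_j` factors as `P = A * B` with `A` an `r × n` matrix whose
`(i,j)` entry is homogeneous of degree `a_i` and `B` an `n × (n-r)` matrix
whose `(i,j)` entry is homogeneous of degree `b_j`. -/
theorem stmt2 (K : Type*) [Field K] [IsAlgClosed K] [CharZero K]
    (n r : ℕ) (hn : 4 ≤ n) (hr2 : 2 ≤ r) (hrn : r ≤ n - 2)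
    (a : Fin r → ℕ) (b : Fin (n - r) → ℕ)
    (P : Matrix (Fin r) (Fin (n - r)) (MvPolynomial (Fin 2) K))
    (hP : ∀ i j, (P i j).IsHomogeneous (a i + b j)) :
    ∃ (A : Matrix (Fin r) (Fin n) (MvPolynomial (Fin 2) K))
      (B : Matrix (Fin n) (Fin (n - r)) (MvPolynomial (Fin 2) K)),
      (∀ i j, (A i j).IsHomogeneous (a i)) ∧
      (∀ i j, (B i j).IsHomogeneous (b j)) ∧
      P = A * B := by
  classical
  have hn' : r + (n - r) = n := by omega
  let e : Fin r ⊕ Fin (n - r) ≃ Fin n := finSumFinEquiv.trans (finCongr hn')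
  choose C D hC hD hPij using fun i j => key (a i) (b j) (P i j) (hP i j)
  refine ⟨fun i k => match e.symm k with
      | Sum.inl i' => if i = i' then X 0 ^ a i else 0
      | Sum.inr j' => D i j',
    fun k j => match e.symm k with
      | Sum.inl i' => C i' j
      | Sum.inr j' => if j = j' then X 1 ^ b j else 0, ?_, ?_, ?_⟩
  · intro i k
    rcases h : e.symm k with i' | j' <;> simp only [h]
    · split
      · simpa using (isHomogeneous_X K (0 : Fin 2)).pow (a i)
      · exact isHomogeneous_zero _ _ _
    · exact hD i j'
  · intro k j
    rcases h : e.symm k with i' | j' <;> simp only [h]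
    · exact hC i' j
    · split
      · simpa using (isHomogeneous_X K (1 : Fin 2)).pow (b j)
      · exact isHomogeneous_zero _ _ _
  · refine Matrix.ext fun i j => ?_
    erw [Matrix.mul_apply]; rw [← Equiv.sum_comp e]
    simp only [Equiv.symm_apply_apply]
    rw [Fintype.sum_sum_type]
    simp only [ite_mul, mul_ite, zero_mul, mul_zero, Finset.sum_ite_eq, Finset.mem_univ,
      if_true]
    exact hPij i j
end

section
/- Let K be an algebraically closed field of characteristic zero, let n ≥ 4 and 2 ≤ r ≤ n−2, and let a_1 ≥ … ≥ a_r ≥ 0 and 0 ≤ b_1 ≤ … ≤ b_{n−r} be integers with a_1 + … + a_r = b_1 + … + b_{n−r} = e > 0. Then there exist an r × n matrix v over K[x,y] whose (i,j) entry is homogeneous of degree a_i, and an n × (n−r) matrix u over K[x,y] whose (i,j) entry is homogeneous of degree b_j, such that: (1) v · u = 0; (2) for every (x₀,y₀) ∈ K² with (x₀,y₀) ≠ (0,0), some r × r minor of v is nonzero when evaluated at (x₀,y₀); (3) for every (x₀,y₀) ∈ K² with (x₀,y₀) ≠ (0,0), some (n−r) × (n−r) minor of u is nonzero when evaluated at (x₀,y₀).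 (Equivalently, there is an exact sequence of vector bundles 0 → ⊕_j O_{P^1}(−b_j) →^u O_{P^1}^{⊕n} →^v ⊕_i O_{P^1}(a_i) → 0, so the locus M(b_•) ∩ M′(a_•) of morphisms P^1 → G(r,n) with prescribed splitting types of the restricted universal sub-bundle and quotient bundle is nonempty.) -/
namespace Stmt3Aux

open Finset

/-- partial sums -/
def ps (a : ℕ → ℕ) (i : ℕ) : ℕ := ∑ t ∈ Finset.range i, a t

lemma ps_mono (a : ℕ → ℕ) : Monotone (ps a) := fun _ _ h =>
  Finset.sum_le_sum_of_subset (Finset.range_subset_range.2 h)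

lemma ps_zero (a : ℕ → ℕ) : ps a 0 = 0 := by simp [ps]

lemma ps_succ (a : ℕ → ℕ) (i : ℕ) : ps a (i+1) = ps a i + a i :=
  Finset.sum_range_succ _ _

/-- position of the `i`-th row breakpoint in the merged staircase -/
def PP (s : ℕ) (a b : ℕ → ℕ) (i : ℕ) : ℕ :=
  if i = 0 then 0 else i + ((Finset.Icc 1 (s-1)).filter fun j => ps b j ≤ ps a i).card

lemma PP_zero (s : ℕ) (a b : ℕ → ℕ) : PP s a b 0 = 0 := by simp [PP]

/-- position of the `j`-th column breakpoint in the merged staircase -/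
def QQ (r s : ℕ) (a b : ℕ → ℕ) (j : ℕ) : ℕ :=
  if j = s then r + s - 1 else j + ((Finset.Icc 1 r).filter fun i => ps a i < ps b j).card

variable (r s : ℕ) (a b : ℕ → ℕ)

lemma PP_lt {i i' : ℕ} (h : i < i') : PP s a b i < PP s a b i' := by
  have hmono : ((Finset.Icc 1 (s-1)).filter fun j => ps b j ≤ ps a i).card ≤
      ((Finset.Icc 1 (s-1)).filter fun j => ps b j ≤ ps a i').card := by
    apply Finset.card_le_card
    apply Finset.monotone_filter_right
    intro j _ hj
    exact hj.trans (ps_mono a h.le)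
  rcases Nat.eq_zero_or_pos i with hi | hi
  · subst hi
    have h0 : PP s a b 0 = 0 := by simp [PP]
    rw [h0, PP, if_neg (by omega)]
    omega
  · rw [PP, if_neg (by omega)]
    conv_rhs => rw [PP, if_neg (by omega)]
    omega

lemma PP_mono {i i' : ℕ} (h : i ≤ i') : PP s a b i ≤ PP s a b i' := by
  rcases eq_or_lt_of_le h with rfl | h
  · exact le_refl _
  · exact (PP_lt s a b h).le

lemma PP_le (hs : 1 ≤ s) {i : ℕ} (hi : i ≤ r) : PP s a b i ≤ r + s - 1 := by
  unfold PP
  rcases Nat.eq_zero_or_pos i with h | h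
  · simp [h]
  · rw [if_neg (by omega)]
    have := (Finset.card_filter_le (Finset.Icc 1 (s-1)) (fun j => ps b j ≤ ps a i))
    rw [Nat.card_Icc] at this
    omega

lemma QQ_lt (hr : 1 ≤ r) (hab : ps a r = ps b s) {j j' : ℕ} (h : j < j') (h' : j' ≤ s) :
    QQ r s a b j < QQ r s a b j' := by
  have hjs : j ≠ s := by omega
  rcases eq_or_lt_of_le h' with heq | hlt
  · -- j' = s
    rw [QQ, if_neg hjs]
    conv_rhs => rw [QQ, if_pos heq]
    subst heq
    have hcard : ((Finset.Icc 1 r).filter fun i => ps a i < ps b j).card < r := by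
      have hss : ((Finset.Icc 1 r).filter fun i => ps a i < ps b j) ⊂ Finset.Icc 1 r := by
        refine ⟨Finset.filter_subset _ _, fun hsub => ?_⟩
        have hrmem : r ∈ (Finset.Icc 1 r).filter fun i => ps a i < ps b j :=
          hsub (Finset.mem_Icc.2 ⟨hr, le_refl r⟩)
        have := (Finset.mem_filter.1 hrmem).2
        have : ps b j ≤ ps a r := hab ▸ ps_mono b (le_of_lt h)
        omega
      have := Finset.card_lt_card hss
      rwa [Nat.card_Icc, Nat.add_sub_cancel] at this
    omega
  · rw [QQ, if_neg hjs]
    conv_rhs => rw [QQ, if_neg (by omega : j' ≠ s)]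
    have hmono : ((Finset.Icc 1 r).filter fun i => ps a i < ps b j).card ≤
        ((Finset.Icc 1 r).filter fun i => ps a i < ps b j').card := by
      apply Finset.card_le_card
      apply Finset.monotone_filter_right
      intro i _ hi
      exact lt_of_lt_of_le hi (ps_mono b h.le)
    omega

lemma QQ_mono (hr : 1 ≤ r) (hab : ps a r = ps b s) {j j' : ℕ} (h : j ≤ j') (h' : j' ≤ s) :
    QQ r s a b j ≤ QQ r s a b j' := by
  rcases eq_or_lt_of_le h with rfl | h
  · exact le_refl _
  · exact (QQ_lt r s a b hr hab h h').le

lemma QQ_zero (hs : 1 ≤ s) : QQ r s a b 0 = 0 := by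
  rw [QQ, if_neg (by omega)]
  simp [ps_zero]

lemma QQ_le {j : ℕ} (hj : j ≤ s) : QQ r s a b j ≤ r + s - 1 := by
  rw [QQ]
  split
  · exact le_refl _
  · have := (Finset.card_filter_le (Finset.Icc 1 r) (fun i => ps a i < ps b j))
    rw [Nat.card_Icc, Nat.add_sub_cancel] at this
    omega

lemma PP_r (hr : 1 ≤ r) (hs : 1 ≤ s) (hab : ps a r = ps b s) :
    PP s a b r = r + s - 1 := by
  rw [PP, if_neg (by omega)]
  have : ((Finset.Icc 1 (s-1)).filter fun j => ps b j ≤ ps a r) = Finset.Icc 1 (s-1) := by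
    apply Finset.filter_true_of_mem
    intro j hj
    rw [hab]
    exact ps_mono b (by have := (Finset.mem_Icc.1 hj).2; omega)
  rw [this, Nat.card_Icc]
  omega

/-- if `A i < B j` then the row breakpoint comes strictly before the column breakpoint -/
lemma key1 (hr : 1 ≤ r) {i j : ℕ} (hi1 : 1 ≤ i) (hir : i ≤ r) (hj1 : 1 ≤ j) (hjs : j ≤ s - 1)
    (h : ps a i < ps b j) : PP s a b i < QQ r s a b j := by
  rw [PP, if_neg (by omega), QQ, if_neg (by omega)]
  have hQ : i ≤ ((Finset.Icc 1 r).filter fun i' => ps a i' < ps b j).card := by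
    have hsub : Finset.Icc 1 i ⊆ (Finset.Icc 1 r).filter fun i' => ps a i' < ps b j := by
      intro i' hi'
      rw [Finset.mem_Icc] at hi'
      exact Finset.mem_filter.2 ⟨Finset.mem_Icc.2 ⟨hi'.1, hi'.2.trans hir⟩,
        lt_of_le_of_lt (ps_mono a hi'.2) h⟩
    have := Finset.card_le_card hsub
    rwa [Nat.card_Icc, Nat.add_sub_cancel] at this
  have hP : ((Finset.Icc 1 (s-1)).filter fun j' => ps b j' ≤ ps a i).card ≤ j - 1 := by
    have hsub : ((Finset.Icc 1 (s-1)).filter fun j' => ps b j' ≤ ps a i) ⊆ Finset.Icc 1 (j-1) := by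
      intro j' hj'
      rw [Finset.mem_filter, Finset.mem_Icc] at hj'
      rw [Finset.mem_Icc]
      refine ⟨hj'.1.1, ?_⟩
      by_contra hcon
      have : j ≤ j' := by omega
      have := ps_mono b this
      omega
    have := Finset.card_le_card hsub
    rwa [Nat.card_Icc, Nat.add_sub_cancel] at this
  omega

/-- if `B j ≤ A i` then the column breakpoint comes strictly before the row breakpoint -/
lemma key2 (hr : 1 ≤ r) {i j : ℕ} (hi1 : 1 ≤ i) (hir : i ≤ r) (hj1 : 1 ≤ j) (hjs : j ≤ s - 1)
    (h : ps b j ≤ ps a i) : QQ r s a b j < PP s a b i := by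
  rw [PP, if_neg (by omega), QQ, if_neg (by omega)]
  have hP : j ≤ ((Finset.Icc 1 (s-1)).filter fun j' => ps b j' ≤ ps a i).card := by
    have hsub : Finset.Icc 1 j ⊆ (Finset.Icc 1 (s-1)).filter fun j' => ps b j' ≤ ps a i := by
      intro j' hj'
      rw [Finset.mem_Icc] at hj'
      exact Finset.mem_filter.2 ⟨Finset.mem_Icc.2 ⟨hj'.1, hj'.2.trans hjs⟩,
        (ps_mono b hj'.2).trans h⟩
    have := Finset.card_le_card hsub
    rwa [Nat.card_Icc, Nat.add_sub_cancel] at this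
  have hQ : ((Finset.Icc 1 r).filter fun i' => ps a i' < ps b j).card ≤ i - 1 := by
    have hsub : ((Finset.Icc 1 r).filter fun i' => ps a i' < ps b j) ⊆ Finset.Icc 1 (i-1) := by
      intro i' hi'
      rw [Finset.mem_filter, Finset.mem_Icc] at hi'
      rw [Finset.mem_Icc]
      refine ⟨hi'.1.1, ?_⟩
      by_contra hcon
      have : i ≤ i' := by omega
      have := ps_mono a this
      omega
    have := Finset.card_le_card hsub
    rwa [Nat.card_Icc, Nat.add_sub_cancel] at this
  omega

lemma PQ_ne (hr : 1 ≤ r) {i j : ℕ} (hi1 : 1 ≤ i) (hir : i ≤ r) (hj1 : 1 ≤ j) (hjs : j ≤ s - 1) :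
    PP s a b i ≠ QQ r s a b j := by
  rcases le_or_gt (ps b j) (ps a i) with h | h
  · exact (key2 r s a b hr hi1 hir hj1 hjs h).ne'
  · exact (key1 r s a b hr hi1 hir hj1 hjs h).ne

lemma cover (hr : 1 ≤ r) (hs : 1 ≤ s) (hab : ps a r = ps b s) :
    ((Finset.Icc 1 r).image (PP s a b)) ∪ ((Finset.Icc 1 (s-1)).image (QQ r s a b))
      = Finset.Icc 1 (r + s - 1) := by
  apply Finset.eq_of_subset_of_card_le
  · intro k hk
    rw [Finset.mem_union] at hk
    rcases hk with hk | hk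
    · obtain ⟨i, hi, rfl⟩ := Finset.mem_image.1 hk
      rw [Finset.mem_Icc] at hi
      rw [Finset.mem_Icc]
      constructor
      · rw [PP, if_neg (by omega)]; omega
      · exact PP_le r s a b hs hi.2
    · obtain ⟨j, hj, rfl⟩ := Finset.mem_image.1 hk
      rw [Finset.mem_Icc] at hj
      rw [Finset.mem_Icc]
      constructor
      · rw [QQ, if_neg (by omega)]; omega
      · exact QQ_le r s a b (by omega)
  · have hdisj : Disjoint ((Finset.Icc 1 r).image (PP s a b))
        ((Finset.Icc 1 (s-1)).image (QQ r s a b)) := by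
      rw [Finset.disjoint_left]
      intro k hk hk'
      obtain ⟨i, hi, hik⟩ := Finset.mem_image.1 hk
      obtain ⟨j, hj, hjk⟩ := Finset.mem_image.1 hk'
      rw [Finset.mem_Icc] at hi hj
      exact PQ_ne r s a b hr hi.1 hi.2 hj.1 hj.2 (hik.trans hjk.symm)
    rw [Finset.card_union_of_disjoint hdisj]
    have h1 : ((Finset.Icc 1 r).image (PP s a b)).card = r := by
      rw [Finset.card_image_of_injOn, Nat.card_Icc, Nat.add_sub_cancel]
      intro i _ i' _ hii'
      by_contra hne
      rcases Nat.lt_or_ge i i' with h | h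
      · exact absurd hii' (PP_lt s a b h).ne
      · exact absurd hii'.symm (PP_lt s a b (by omega)).ne
    have h2 : ((Finset.Icc 1 (s-1)).image (QQ r s a b)).card = s - 1 := by
      rw [Finset.card_image_of_injOn, Nat.card_Icc, Nat.add_sub_cancel]
      intro j hj j' hj' hjj'
      simp only [Finset.coe_Icc, Set.mem_Icc] at hj hj'
      by_contra hne
      rcases Nat.lt_or_ge j j' with h | h
      · exact absurd hjj' (QQ_lt r s a b hr hab h (by omega)).ne
      · exact absurd hjj'.symm (QQ_lt r s a b hr hab (by omega) (by omega)).ne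
    rw [h1, h2, Nat.card_Icc]
    omega


/-- number of row breakpoints at position `≤ k` -/
def cA (r s : ℕ) (a b : ℕ → ℕ) (k : ℕ) : ℕ :=
  ((Finset.Icc 1 r).filter fun i => PP s a b i ≤ k).card

/-- number of column breakpoints at position `≤ k` -/
def cB (r s : ℕ) (a b : ℕ → ℕ) (k : ℕ) : ℕ :=
  ((Finset.Icc 1 (s-1)).filter fun j => QQ r s a b j ≤ k).card

/-- the cumulative flow through the first `k` cells of the staircase -/
def FF (r s : ℕ) (a b : ℕ → ℕ) (k : ℕ) : ℕ :=
  max (ps a (cA r s a b k)) (ps b (cB r s a b k))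

lemma cA_le : cA r s a b k ≤ r := by
  have := Finset.card_filter_le (Finset.Icc 1 r) (fun i => PP s a b i ≤ k)
  rw [Nat.card_Icc, Nat.add_sub_cancel] at this
  exact this

lemma cB_le : cB r s a b k ≤ s - 1 := by
  have := Finset.card_filter_le (Finset.Icc 1 (s-1)) (fun j => QQ r s a b j ≤ k)
  rw [Nat.card_Icc, Nat.add_sub_cancel] at this
  exact this

lemma FF_mono : Monotone (FF r s a b) := by
  intro k k' hk
  have hA : cA r s a b k ≤ cA r s a b k' := by
    apply Finset.card_le_card
    apply Finset.monotone_filter_right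
    intro i _ hi
    exact hi.trans hk
  have hB : cB r s a b k ≤ cB r s a b k' := by
    apply Finset.card_le_card
    apply Finset.monotone_filter_right
    intro j _ hj
    exact hj.trans hk
  exact max_le_max (ps_mono a hA) (ps_mono b hB)

/-- if the count is positive, the breakpoint indexed by the count is itself at position `≤ k` -/
lemma count_sel {N : ℕ} {f : ℕ → ℕ} (hf : ∀ {x y : ℕ}, x < y → y ≤ N → f x < f y) (k : ℕ)
    (h : 1 ≤ ((Finset.Icc 1 N).filter fun i => f i ≤ k).card) :
    f (((Finset.Icc 1 N).filter fun i => f i ≤ k).card) ≤ k := by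
  set c := ((Finset.Icc 1 N).filter fun i => f i ≤ k).card with hc
  by_contra hcon
  have hcN : c ≤ N := by
    have := Finset.card_filter_le (Finset.Icc 1 N) (fun i => f i ≤ k)
    rw [Nat.card_Icc, Nat.add_sub_cancel] at this
    exact this
  have hsub : ((Finset.Icc 1 N).filter fun i => f i ≤ k) ⊆ Finset.Icc 1 (c-1) := by
    intro i hi
    rw [Finset.mem_filter, Finset.mem_Icc] at hi
    rw [Finset.mem_Icc]
    refine ⟨hi.1.1, ?_⟩
    by_contra hcon2
    rcases Nat.lt_or_ge c i with hlt | hge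
    · exact absurd hi.2 (by have := hf hlt hi.1.2; omega)
    · have : i = c := by omega
      subst this
      exact hcon hi.2
  have := Finset.card_le_card hsub
  rw [Nat.card_Icc] at this
  omega

lemma cA_PP (hi1 : 1 ≤ i) (hir : i ≤ r) : cA r s a b (PP s a b i) = i := by
  rw [cA]
  have : ((Finset.Icc 1 r).filter fun i' => PP s a b i' ≤ PP s a b i) = Finset.Icc 1 i := by
    ext i'
    rw [Finset.mem_filter, Finset.mem_Icc, Finset.mem_Icc]
    constructor
    · rintro ⟨⟨h1, _⟩, h2⟩
      refine ⟨h1, ?_⟩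
      by_contra hcon
      exact absurd h2 (by have := PP_lt s a b (show i < i' by omega); omega)
    · rintro ⟨h1, h2⟩
      exact ⟨⟨h1, h2.trans hir⟩, PP_mono s a b h2⟩
  rw [this, Nat.card_Icc]
  omega

lemma cB_QQ (hr : 1 ≤ r) (hab : ps a r = ps b s) (hj1 : 1 ≤ j) (hjs : j ≤ s - 1) :
    cB r s a b (QQ r s a b j) = j := by
  rw [cB]
  have : ((Finset.Icc 1 (s-1)).filter fun j' => QQ r s a b j' ≤ QQ r s a b j)
      = Finset.Icc 1 j := by
    ext j'
    rw [Finset.mem_filter, Finset.mem_Icc, Finset.mem_Icc]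
    constructor
    · rintro ⟨⟨h1, h2⟩, h3⟩
      refine ⟨h1, ?_⟩
      by_contra hcon
      exact absurd h3
        (by have := QQ_lt r s a b hr hab (show j < j' by omega) (by omega); omega)
    · rintro ⟨h1, h2⟩
      exact ⟨⟨h1, h2.trans hjs⟩, QQ_mono r s a b hr hab h2 (by omega)⟩
  rw [this, Nat.card_Icc]
  omega

lemma FF_zero : FF r s a b 0 = 0 := by
  have hA : cA r s a b 0 = 0 := by
    rw [cA, Finset.card_eq_zero, Finset.filter_eq_empty_iff]
    intro i hi
    rw [Finset.mem_Icc] at hi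
    have : PP s a b i ≥ 1 := by rw [PP, if_neg (by omega)]; omega
    omega
  have hB : cB r s a b 0 = 0 := by
    rw [cB, Finset.card_eq_zero, Finset.filter_eq_empty_iff]
    intro j hj
    rw [Finset.mem_Icc] at hj
    have : QQ r s a b j ≥ 1 := by rw [QQ, if_neg (by omega)]; omega
    omega
  rw [FF, hA, hB, ps_zero, ps_zero]
  exact max_self 0

lemma FF_PP (hr : 1 ≤ r) (hab : ps a r = ps b s) {i : ℕ} (hir : i ≤ r) :
    FF r s a b (PP s a b i) = ps a i := by
  rcases Nat.eq_zero_or_pos i with rfl | hi1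
  · have h0 : PP s a b 0 = 0 := by simp [PP]
    rw [h0, FF_zero, ps_zero]
  rw [FF, cA_PP r s a b hi1 hir]
  have hB : ps b (cB r s a b (PP s a b i)) ≤ ps a i := by
    set c := cB r s a b (PP s a b i) with hc
    rcases Nat.eq_zero_or_pos c with h0 | h1
    · rw [h0, ps_zero]; omega
    · have hcs : c ≤ s - 1 := cB_le r s a b
      have hQc : QQ r s a b c ≤ PP s a b i := by
        rw [hc, cB]
        exact count_sel (fun {x y} hx hy => QQ_lt r s a b hr hab hx (by omega)) _ h1
      by_contra hcon
      have := key1 r s a b hr hi1 hir h1 hcs (by omega)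
      omega
  exact max_eq_left hB

lemma FF_m (hr : 1 ≤ r) (hs : 1 ≤ s) (hab : ps a r = ps b s) :
    FF r s a b (r + s - 1) = ps b s := by
  rw [FF]
  have hA : cA r s a b (r + s - 1) = r := by
    rw [cA]
    have : ((Finset.Icc 1 r).filter fun i => PP s a b i ≤ r + s - 1) = Finset.Icc 1 r := by
      apply Finset.filter_true_of_mem
      intro i hi
      rw [Finset.mem_Icc] at hi
      exact PP_le r s a b hs hi.2
    rw [this, Nat.card_Icc]
    omega
  rw [hA, hab]
  exact max_eq_left (ps_mono b (by have := cB_le r s a b (k := r + s - 1); omega))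

lemma FF_QQ (hr : 1 ≤ r) (hs : 1 ≤ s) (hab : ps a r = ps b s) {j : ℕ} (hjs : j ≤ s) :
    FF r s a b (QQ r s a b j) = ps b j := by
  rcases Nat.eq_zero_or_pos j with rfl | hj1
  · rw [QQ_zero r s a b hs, FF_zero, ps_zero]
  rcases eq_or_lt_of_le hjs with heq | hjs'
  · rw [QQ, if_pos heq, FF_m r s a b hr hs hab, heq]
  · -- 1 ≤ j ≤ s - 1
    have hjs1 : j ≤ s - 1 := by omega
    rw [FF, cB_QQ r s a b hr hab hj1 hjs1]
    have hA : ps a (cA r s a b (QQ r s a b j)) ≤ ps b j := by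
      set c := cA r s a b (QQ r s a b j) with hc
      rcases Nat.eq_zero_or_pos c with h0 | h1
      · rw [h0, ps_zero]; omega
      · have hcr : c ≤ r := cA_le r s a b
        have hPc : PP s a b c ≤ QQ r s a b j := by
          rw [hc, cA]
          exact count_sel (fun {x y} hx _ => PP_lt s a b hx) _ h1
        by_contra hcon
        have := key2 r s a b hr h1 hcr hj1 hjs1 (by omega)
        omega
    exact max_eq_right hA


section Mat

open MvPolynomial

variable (K : Type*) [CommRing K] (r s : ℕ) (a b : ℕ → ℕ)

/-- the entries of the surjection `v` -/
noncomputable def vEnt (i k : ℕ) : MvPolynomial (Fin 2) K :=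
  if PP s a b i ≤ k ∧ k ≤ PP s a b (i+1) then
    X 0 ^ (ps a (i+1) - FF r s a b k) * X 1 ^ (FF r s a b k - ps a i) else 0

/-- the entries of the injection `u` -/
noncomputable def uEnt (k j : ℕ) : MvPolynomial (Fin 2) K :=
  if QQ r s a b j ≤ k ∧ k ≤ QQ r s a b (j+1) then
    C ((-1 : K)^k) * (X 0 ^ (FF r s a b k - ps b j) * X 1 ^ (ps b (j+1) - FF r s a b k)) else 0

lemma vEnt_zero {i k : ℕ} (h : ¬(PP s a b i ≤ k ∧ k ≤ PP s a b (i+1))) :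
    vEnt K r s a b i k = 0 := by rw [vEnt, if_neg h]

lemma uEnt_zero {k j : ℕ} (h : ¬(QQ r s a b j ≤ k ∧ k ≤ QQ r s a b (j+1))) :
    uEnt K r s a b k j = 0 := by rw [uEnt, if_neg h]

lemma vEnt_hom (hr : 1 ≤ r) (hab : ps a r = ps b s) {i : ℕ} (hi : i < r) (k : ℕ) :
    (vEnt K r s a b i k).IsHomogeneous (a i) := by
  rw [vEnt]
  split_ifs with h
  · have hF1 : ps a i ≤ FF r s a b k := by
      have := FF_mono r s a b h.1
      rwa [FF_PP r s a b hr hab (by omega)] at this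
    have hF2 : FF r s a b k ≤ ps a (i+1) := by
      have := FF_mono r s a b h.2
      rwa [FF_PP r s a b hr hab (by omega)] at this
    have hsum : (ps a (i+1) - FF r s a b k) + (FF r s a b k - ps a i) = a i := by
      have := ps_succ a i; omega
    rw [← hsum]
    exact (isHomogeneous_X_pow _ _).mul (isHomogeneous_X_pow _ _)
  · exact isHomogeneous_zero _ _ _

lemma uEnt_hom (hr : 1 ≤ r) (hs : 1 ≤ s) (hab : ps a r = ps b s) {j : ℕ} (hj : j < s) (k : ℕ) :
    (uEnt K r s a b k j).IsHomogeneous (b j) := by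
  rw [uEnt]
  split_ifs with h
  · have hF1 : ps b j ≤ FF r s a b k := by
      have := FF_mono r s a b h.1
      rwa [FF_QQ r s a b hr hs hab (by omega)] at this
    have hF2 : FF r s a b k ≤ ps b (j+1) := by
      have := FF_mono r s a b h.2
      rwa [FF_QQ r s a b hr hs hab (by omega)] at this
    have hsum : (FF r s a b k - ps b j) + (ps b (j+1) - FF r s a b k) = b j := by
      have := ps_succ b j; omega
    have h0 := (isHomogeneous_C (Fin 2) ((-1:K)^k)).mul
      ((isHomogeneous_X_pow (R := K) (0 : Fin 2) (FF r s a b k - ps b j)).mul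
        (isHomogeneous_X_pow (1 : Fin 2) (ps b (j+1) - FF r s a b k)))
    simpa [hsum] using h0
  · exact isHomogeneous_zero _ _ _

lemma vEnt_diag1 (hr : 1 ≤ r) (hab : ps a r = ps b s) {i : ℕ} (hi : i < r) :
    vEnt K r s a b i (PP s a b i) = X 0 ^ (a i) := by
  rw [vEnt, if_pos ⟨le_refl _, PP_mono s a b (by omega)⟩, FF_PP r s a b hr hab (by omega),
    Nat.sub_self, pow_zero, mul_one]
  congr 1
  have := ps_succ a i; omega

lemma vEnt_diag2 (hr : 1 ≤ r) (hab : ps a r = ps b s) {i : ℕ} (hi : i < r) :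
    vEnt K r s a b i (PP s a b (i+1)) = X 1 ^ (a i) := by
  rw [vEnt, if_pos ⟨PP_mono s a b (by omega), le_refl _⟩, FF_PP r s a b hr hab (by omega),
    Nat.sub_self, pow_zero, one_mul]
  congr 1
  have := ps_succ a i; omega

lemma uEnt_diag1 (hr : 1 ≤ r) (hs : 1 ≤ s) (hab : ps a r = ps b s) {j : ℕ} (hj : j < s) :
    uEnt K r s a b (QQ r s a b j) j = C ((-1 : K)^(QQ r s a b j)) * X 1 ^ (b j) := by
  rw [uEnt, if_pos ⟨le_refl _, QQ_mono r s a b hr hab (by omega) (by omega)⟩,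
    FF_QQ r s a b hr hs hab (by omega), Nat.sub_self, pow_zero, one_mul]
  congr 2
  have := ps_succ b j; omega

lemma uEnt_diag2 (hr : 1 ≤ r) (hs : 1 ≤ s) (hab : ps a r = ps b s) {j : ℕ} (hj : j < s) :
    uEnt K r s a b (QQ r s a b (j+1)) j = C ((-1 : K)^(QQ r s a b (j+1))) * X 0 ^ (b j) := by
  rw [uEnt, if_pos ⟨QQ_mono r s a b hr hab (by omega) (by omega), le_refl _⟩,
    FF_QQ r s a b hr hs hab (by omega), Nat.sub_self, pow_zero, mul_one]
  congr 2
  have := ps_succ b j; omega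

lemma cancel (hr : 1 ≤ r) (hs : 1 ≤ s) (hab : ps a r = ps b s) {i j L : ℕ}
    (hi : i < r) (hj : j < s)
    (h1 : PP s a b i ≤ L) (h2 : L + 1 ≤ PP s a b (i+1))
    (h3 : QQ r s a b j ≤ L) (h4 : L + 1 ≤ QQ r s a b (j+1)) :
    vEnt K r s a b i L * uEnt K r s a b L j
      + vEnt K r s a b i (L+1) * uEnt K r s a b (L+1) j = 0 := by
  have hA0 : ps a i ≤ FF r s a b L := by
    have := FF_mono r s a b h1; rwa [FF_PP r s a b hr hab (by omega)] at this
  have hA1 : FF r s a b (L+1) ≤ ps a (i+1) := by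
    have := FF_mono r s a b h2; rwa [FF_PP r s a b hr hab (by omega)] at this
  have hB0 : ps b j ≤ FF r s a b L := by
    have := FF_mono r s a b h3; rwa [FF_QQ r s a b hr hs hab (by omega)] at this
  have hB1 : FF r s a b (L+1) ≤ ps b (j+1) := by
    have := FF_mono r s a b h4; rwa [FF_QQ r s a b hr hs hab (by omega)] at this
  have hmono : FF r s a b L ≤ FF r s a b (L+1) := FF_mono r s a b (by omega)
  have ev1 : vEnt K r s a b i L
      = X 0 ^ (ps a (i+1) - FF r s a b L) * X 1 ^ (FF r s a b L - ps a i) := by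
    rw [vEnt, if_pos ⟨h1, by omega⟩]
  have ev2 : vEnt K r s a b i (L+1)
      = X 0 ^ (ps a (i+1) - FF r s a b (L+1)) * X 1 ^ (FF r s a b (L+1) - ps a i) := by
    rw [vEnt, if_pos ⟨by omega, h2⟩]
  have eu1 : uEnt K r s a b L j
      = C ((-1 : K)^L) * (X 0 ^ (FF r s a b L - ps b j) * X 1 ^ (ps b (j+1) - FF r s a b L)) := by
    rw [uEnt, if_pos ⟨h3, by omega⟩]
  have eu2 : uEnt K r s a b (L+1) j
      = C ((-1 : K)^(L+1)) * (X 0 ^ (FF r s a b (L+1) - ps b j)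
          * X 1 ^ (ps b (j+1) - FF r s a b (L+1))) := by
    rw [uEnt, if_pos ⟨by omega, h4⟩]
  have e1 : ps a (i+1) - FF r s a b L + (FF r s a b L - ps b j) = ps a (i+1) - ps b j := by
    omega
  have e2 : FF r s a b L - ps a i + (ps b (j+1) - FF r s a b L) = ps b (j+1) - ps a i := by
    omega
  have e3 : ps a (i+1) - FF r s a b (L+1) + (FF r s a b (L+1) - ps b j)
      = ps a (i+1) - ps b j := by omega
  have e4 : FF r s a b (L+1) - ps a i + (ps b (j+1) - FF r s a b (L+1))
      = ps b (j+1) - ps a i := by omega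
  have t1 : vEnt K r s a b i L * uEnt K r s a b L j
      = C ((-1 : K)^L) * (X 0 ^ (ps a (i+1) - ps b j) * X 1 ^ (ps b (j+1) - ps a i)) := by
    rw [ev1, eu1, ← e1, ← e2]; ring
  have t2 : vEnt K r s a b i (L+1) * uEnt K r s a b (L+1) j
      = C ((-1 : K)^(L+1)) * (X 0 ^ (ps a (i+1) - ps b j) * X 1 ^ (ps b (j+1) - ps a i)) := by
    rw [ev2, eu2, ← e3, ← e4]; ring
  rw [t1, t2, ← add_mul, ← C_add]
  have hz : (-1 : K)^L + (-1 : K)^(L+1) = 0 := by ring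
  rw [hz, C_0, zero_mul]

end Mat

end Stmt3Aux

open Stmt3Aux

/-- existence of an exact sequence
`0 → ⊕_j O(-b_j) →ᵘ O^{⊕n} →ᵛ ⊕_i O(a_i) → 0`, expressed via matrices of
homogeneous polynomials: `v * u = 0`, at every point of `P^1` some maximal
minor of `v` is nonzero (surjectivity of `v`), and at every point some maximal
minor of `u` is nonzero (injectivity of `u` with locally free cokernel).
Hence the locus `M(b_•) ∩ M'(a_•)` is nonempty. -/
theorem stmt3 (K : Type*) [Field K] [IsAlgClosed K] [CharZero K]
    (n r e : ℕ) (hn : 4 ≤ n) (hr2 : 2 ≤ r) (hrn : r ≤ n - 2)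
    (a : Fin r → ℕ) (b : Fin (n - r) → ℕ)
    (ha : Antitone a) (hb : Monotone b)
    (hae : ∑ i, a i = e) (hbe : ∑ j, b j = e) (he : 0 < e) :
    ∃ (v : Matrix (Fin r) (Fin n) (MvPolynomial (Fin 2) K))
      (u : Matrix (Fin n) (Fin (n - r)) (MvPolynomial (Fin 2) K)),
      (∀ i j, (v i j).IsHomogeneous (a i)) ∧
      (∀ i j, (u i j).IsHomogeneous (b j)) ∧
      v * u = 0 ∧
      (∀ x₀ y₀ : K, (x₀, y₀) ≠ (0, 0) →
        ∃ g : Fin r → Fin n, Function.Injective g ∧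
          MvPolynomial.eval ![x₀, y₀] (v.submatrix id g).det ≠ 0) ∧
      (∀ x₀ y₀ : K, (x₀, y₀) ≠ (0, 0) →
        ∃ g : Fin (n - r) → Fin n, Function.Injective g ∧
          MvPolynomial.eval ![x₀, y₀] (u.submatrix g id).det ≠ 0) := by
  classical
  have hrs : n = r + (n - r) := by omega
  have hr1 : 1 ≤ r := by omega
  have hs1 : 1 ≤ n - r := by omega
  -- extend a, b to ℕ-indexed functions
  set a' : ℕ → ℕ := fun i => if h : i < r then a ⟨i, h⟩ else 0 with ha'_def
  set b' : ℕ → ℕ := fun j => if h : j < (n - r) then b ⟨j, h⟩ else 0 with hb'_def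
  have ha' : ∀ i : Fin r, a' (i : ℕ) = a i := fun i => by
    simp only [ha'_def, dif_pos i.isLt]
  have hb' : ∀ j : Fin (n - r), b' (j : ℕ) = b j := fun j => by
    simp only [hb'_def, dif_pos j.isLt]
  have hpa : ps a' r = e := by
    rw [ps, ← Fin.sum_univ_eq_sum_range, ← hae]
    exact Finset.sum_congr rfl fun i _ => ha' i
  have hpb : ps b' (n - r) = e := by
    rw [ps, ← Fin.sum_univ_eq_sum_range, ← hbe]
    exact Finset.sum_congr rfl fun j _ => hb' j
  have hab : ps a' r = ps b' (n - r) := by rw [hpa, hpb]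
  refine ⟨Matrix.of fun i k => vEnt K r (n - r) a' b' (i : ℕ) (k : ℕ),
          Matrix.of fun k j => uEnt K r (n - r) a' b' (k : ℕ) (j : ℕ), ?_, ?_, ?_, ?_, ?_⟩
  · -- homogeneity of v
    intro i k
    have := vEnt_hom K r (n - r) a' b' hr1 hab i.isLt (k : ℕ)
    rwa [ha' i] at this
  · -- homogeneity of u
    intro k j
    have := uEnt_hom K r (n - r) a' b' hr1 hs1 hab j.isLt (k : ℕ)
    rwa [hb' j] at this
  · -- v * u = 0
    refine Matrix.ext fun i j => ?_
    rw [Matrix.mul_apply, Matrix.zero_apply]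
    simp only [Matrix.of_apply]
    have hi : (i : ℕ) < r := i.isLt
    have hj : (j : ℕ) < (n - r) := j.isLt
    have hPle0 : PP (n - r) a' b' (i : ℕ) ≤ r + (n - r) - 1 := PP_le r (n - r) a' b' hs1 (by omega)
    have hPle1 : PP (n - r) a' b' ((i : ℕ)+1) ≤ r + (n - r) - 1 := PP_le r (n - r) a' b' hs1 (by omega)
    have hQle0 : QQ r (n - r) a' b' (j : ℕ) ≤ r + (n - r) - 1 := QQ_le r (n - r) a' b' (by omega)
    have hQle1 : QQ r (n - r) a' b' ((j : ℕ)+1) ≤ r + (n - r) - 1 := QQ_le r (n - r) a' b' (by omega)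
    have hpp' : PP (n - r) a' b' (i : ℕ) < PP (n - r) a' b' ((i : ℕ)+1) := PP_lt (n - r) a' b' (by omega)
    have hqq' : QQ r (n - r) a' b' (j : ℕ) < QQ r (n - r) a' b' ((j : ℕ)+1) :=
      QQ_lt r (n - r) a' b' hr1 hab (by omega) (by omega)
    obtain ⟨L, hLP, hLQ, hLor⟩ : ∃ L, PP (n - r) a' b' (i : ℕ) ≤ L ∧
        QQ r (n - r) a' b' (j : ℕ) ≤ L ∧
        (L = PP (n - r) a' b' (i : ℕ) ∨ L = QQ r (n - r) a' b' (j : ℕ)) :=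
      ⟨max _ _, le_max_left _ _, le_max_right _ _, (max_choice _ _).imp id id⟩
    obtain ⟨R, hRP, hRQ, hRor⟩ : ∃ R, R ≤ PP (n - r) a' b' ((i : ℕ)+1) ∧
        R ≤ QQ r (n - r) a' b' ((j : ℕ)+1) ∧
        (R = PP (n - r) a' b' ((i : ℕ)+1) ∨ R = QQ r (n - r) a' b' ((j : ℕ)+1)) :=
      ⟨min _ _, min_le_left _ _, min_le_right _ _, (min_choice _ _).imp id id⟩
    rcases lt_trichotomy L R with hLR | hLR | hLR
    · -- two cancelling terms
      have hRL : R = L + 1 := by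
        by_contra hne
        have hk1 : 1 ≤ L + 1 := by omega
        have hkm : L + 1 ≤ r + (n - r) - 1 := by omega
        have hmem : L + 1 ∈ Finset.Icc 1 (r + (n - r) - 1) := Finset.mem_Icc.2 ⟨hk1, by omega⟩
        clear hLor hRor
        rw [← cover r (n - r) a' b' hr1 hs1 hab, Finset.mem_union] at hmem
        rcases hmem with hmem | hmem
        · obtain ⟨i₀, hi₀, hPi₀⟩ := Finset.mem_image.1 hmem
          rw [Finset.mem_Icc] at hi₀
          have c1 : PP (n - r) a' b' (i : ℕ) < PP (n - r) a' b' i₀ := by omega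
          have c2 : PP (n - r) a' b' i₀ < PP (n - r) a' b' ((i : ℕ)+1) := by omega
          have d1 : (i : ℕ) < i₀ := by
            by_contra hcon
            have := PP_mono (n - r) a' b' (show i₀ ≤ (i : ℕ) by omega)
            omega
          have d2 : i₀ < (i : ℕ) + 1 := by
            by_contra hcon
            have := PP_mono (n - r) a' b' (show (i : ℕ) + 1 ≤ i₀ by omega)
            omega
          omega
        · obtain ⟨j₀, hj₀, hQj₀⟩ := Finset.mem_image.1 hmem
          rw [Finset.mem_Icc] at hj₀
          have c1 : QQ r (n - r) a' b' (j : ℕ) < QQ r (n - r) a' b' j₀ := by omega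
          have c2 : QQ r (n - r) a' b' j₀ < QQ r (n - r) a' b' ((j : ℕ)+1) := by omega
          have d1 : (j : ℕ) < j₀ := by
            by_contra hcon
            have := QQ_mono r (n - r) a' b' hr1 hab (show j₀ ≤ (j : ℕ) by omega) (by omega)
            omega
          have d2 : j₀ < (j : ℕ) + 1 := by
            by_contra hcon
            have := QQ_mono r (n - r) a' b' hr1 hab (show (j : ℕ) + 1 ≤ j₀ by omega) (by omega)
            omega
          omega
      have hLn : L < n := by omega
      have hL1n : L + 1 < n := by omega
      have hne : (⟨L, hLn⟩ : Fin n) ≠ ⟨L+1, hL1n⟩ := Fin.ne_of_val_ne (show L ≠ L + 1 by omega)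
      have hvanish : ∀ k ∈ (Finset.univ : Finset (Fin n)),
          k ∉ ({⟨L, hLn⟩, ⟨L+1, hL1n⟩} : Finset (Fin n)) →
          vEnt K r (n - r) a' b' (i : ℕ) (k : ℕ) * uEnt K r (n - r) a' b' (k : ℕ) (j : ℕ) = 0 := by
        intro k _ hk
        simp only [Finset.mem_insert, Finset.mem_singleton, not_or] at hk
        have hk1 : (k : ℕ) ≠ L := fun h => hk.1 (Fin.ext h)
        have hk2 : (k : ℕ) ≠ L + 1 := fun h => hk.2 (Fin.ext h)
        rcases (show (k : ℕ) < L ∨ L + 1 < (k : ℕ) by omega) with h | h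
        · rcases hLor with h' | h'
          · rw [vEnt_zero K r (n - r) a' b' (fun hc => by omega), zero_mul]
          · rw [uEnt_zero K r (n - r) a' b' (fun hc => by omega), mul_zero]
        · rcases hRor with h' | h'
          · rw [vEnt_zero K r (n - r) a' b' (fun hc => by omega), zero_mul]
          · rw [uEnt_zero K r (n - r) a' b' (fun hc => by omega), mul_zero]
      rw [← Finset.sum_subset (Finset.subset_univ ({⟨L, hLn⟩, ⟨L+1, hL1n⟩} : Finset (Fin n)))
        hvanish, Finset.sum_pair hne]
      show vEnt K r (n - r) a' b' (i : ℕ) L * uEnt K r (n - r) a' b' L (j : ℕ)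
        + vEnt K r (n - r) a' b' (i : ℕ) (L+1) * uEnt K r (n - r) a' b' (L+1) (j : ℕ) = 0
      exact cancel K r (n - r) a' b' hr1 hs1 hab hi hj hLP (by omega) hLQ (by omega)
    · -- L = R is impossible
      exfalso
      have hcases : PP (n - r) a' b' (i : ℕ) = QQ r (n - r) a' b' ((j : ℕ)+1)
          ∨ QQ r (n - r) a' b' (j : ℕ) = PP (n - r) a' b' ((i : ℕ)+1) := by
        rcases hLor with h1 | h1 <;> rcases hRor with h2 | h2 <;> omega
      rcases hcases with hc | hc
      · rcases Nat.eq_zero_or_pos (i : ℕ) with hi0 | hi0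
        · have h0 : PP (n - r) a' b' (i : ℕ) = 0 := by rw [hi0, PP_zero]
          have h1 : QQ r (n - r) a' b' 0 < QQ r (n - r) a' b' ((j : ℕ)+1) :=
            QQ_lt r (n - r) a' b' hr1 hab (by omega) (by omega)
          rw [QQ_zero r (n - r) a' b' hs1] at h1
          omega
        · rcases eq_or_lt_of_le (show (j : ℕ) + 1 ≤ (n - r) by omega) with hjs | hjs
          · have h1 : QQ r (n - r) a' b' ((j : ℕ)+1) = r + (n - r) - 1 := by rw [QQ, if_pos hjs]
            have h2 : PP (n - r) a' b' (i : ℕ) < PP (n - r) a' b' r := PP_lt (n - r) a' b' (by omega)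
            have h3 : PP (n - r) a' b' r = r + (n - r) - 1 := PP_r r (n - r) a' b' hr1 hs1 hab
            omega
          · exact absurd hc
              (PQ_ne r (n - r) a' b' hr1 hi0 (by omega) (by omega) (by omega))
      · rcases Nat.eq_zero_or_pos (j : ℕ) with hj0 | hj0
        · have h0 : QQ r (n - r) a' b' (j : ℕ) = 0 := by rw [hj0, QQ_zero r (n - r) a' b' hs1]
          have h1 : PP (n - r) a' b' 0 < PP (n - r) a' b' ((i : ℕ)+1) := PP_lt (n - r) a' b' (by omega)
          rw [PP_zero] at h1
          omega
        · exact absurd hc.symm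
            (PQ_ne r (n - r) a' b' hr1 (by omega) (by omega) hj0 (by omega))
    · -- disjoint supports: all terms vanish
      apply Finset.sum_eq_zero
      intro k _
      by_cases h1 : PP (n - r) a' b' (i : ℕ) ≤ (k : ℕ) ∧ (k : ℕ) ≤ PP (n - r) a' b' ((i : ℕ)+1)
      · by_cases h2 : QQ r (n - r) a' b' (j : ℕ) ≤ (k : ℕ) ∧ (k : ℕ) ≤ QQ r (n - r) a' b' ((j : ℕ)+1)
        · exfalso; rcases hLor with h3 | h3 <;> rcases hRor with h4 | h4 <;> omega
        · rw [uEnt_zero K r (n - r) a' b' h2, mul_zero]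
      · rw [vEnt_zero K r (n - r) a' b' h1, zero_mul]
  · -- minors of v
    intro x₀ y₀ hxy
    by_cases hx : x₀ = 0
    · have hy : y₀ ≠ 0 := fun h => hxy (by rw [hx, h])
      refine ⟨fun i => ⟨PP (n - r) a' b' ((i : ℕ)+1), by
        have := PP_le r (n - r) a' b' hs1 (show (i : ℕ)+1 ≤ r from i.isLt); omega⟩, ?_, ?_⟩
      · intro i i' hgij
        have h2 : PP (n - r) a' b' ((i : ℕ)+1) = PP (n - r) a' b' ((i' : ℕ)+1) :=
          congrArg Fin.val hgij
        apply Fin.ext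
        rcases lt_trichotomy (i : ℕ) (i' : ℕ) with h | h | h
        · exact absurd h2 (PP_lt (n - r) a' b' (by omega)).ne
        · exact h
        · exact absurd h2.symm (PP_lt (n - r) a' b' (by omega)).ne
      · rw [RingHom.map_det, RingHom.mapMatrix_apply]
        rw [Matrix.det_of_lowerTriangular _ (show Matrix.BlockTriangular _ OrderDual.toDual
          from fun p q hlt => ?_)]
        · apply Finset.prod_ne_zero_iff.2
          intro i _
          simp only [Matrix.map_apply, Matrix.submatrix_apply, id_eq, Matrix.of_apply]
          rw [vEnt_diag2 K r (n - r) a' b' hr1 hab i.isLt, ha' i]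
          simp only [map_pow, MvPolynomial.eval_X, Matrix.cons_val_one, Matrix.head_cons]
          exact pow_ne_zero _ hy
        · have hpq' : (p : Fin r) < q := OrderDual.toDual_lt_toDual.mp hlt
          have hpq : (p : ℕ) < (q : ℕ) := hpq'
          simp only [Matrix.map_apply, Matrix.submatrix_apply, id_eq, Matrix.of_apply]
          have hz : vEnt K r (n - r) a' b' (p : ℕ) (PP (n - r) a' b' ((q : ℕ)+1)) = 0 :=
            vEnt_zero K r (n - r) a' b' (fun hc => absurd hc.2
              (by have := PP_lt (n - r) a' b' (show (p : ℕ)+1 < (q : ℕ)+1 by omega); omega))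
          rw [hz, map_zero]
    · refine ⟨fun i => ⟨PP (n - r) a' b' (i : ℕ), by
        have := PP_le r (n - r) a' b' hs1 (show (i : ℕ) ≤ r by have := i.isLt; omega);
        omega⟩, ?_, ?_⟩
      · intro i i' hgij
        have h2 : PP (n - r) a' b' (i : ℕ) = PP (n - r) a' b' (i' : ℕ) := congrArg Fin.val hgij
        apply Fin.ext
        rcases lt_trichotomy (i : ℕ) (i' : ℕ) with h | h | h
        · exact absurd h2 (PP_lt (n - r) a' b' h).ne
        · exact h
        · exact absurd h2.symm (PP_lt (n - r) a' b' h).ne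
      · rw [RingHom.map_det, RingHom.mapMatrix_apply]
        rw [Matrix.det_of_upperTriangular (show Matrix.BlockTriangular _ id
          from fun p q hlt => ?_)]
        · apply Finset.prod_ne_zero_iff.2
          intro i _
          simp only [Matrix.map_apply, Matrix.submatrix_apply, id_eq, Matrix.of_apply]
          rw [vEnt_diag1 K r (n - r) a' b' hr1 hab i.isLt, ha' i]
          simp only [map_pow, MvPolynomial.eval_X, Matrix.cons_val_zero]
          exact pow_ne_zero _ hx
        · have hqp : (q : ℕ) < (p : ℕ) := hlt
          simp only [Matrix.map_apply, Matrix.submatrix_apply, id_eq, Matrix.of_apply]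
          have hz : vEnt K r (n - r) a' b' (p : ℕ) (PP (n - r) a' b' (q : ℕ)) = 0 :=
            vEnt_zero K r (n - r) a' b' (fun hc => absurd hc.1
              (by have := PP_lt (n - r) a' b' hqp; omega))
          rw [hz, map_zero]
  · -- minors of u
    intro x₀ y₀ hxy
    by_cases hy : y₀ = 0
    · have hx : x₀ ≠ 0 := fun h => hxy (by rw [hy, h])
      refine ⟨fun j => ⟨QQ r (n - r) a' b' ((j : ℕ)+1), by
        have := QQ_le r (n - r) a' b' (show (j : ℕ)+1 ≤ (n - r) from j.isLt); omega⟩, ?_, ?_⟩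
      · intro j j' hgij
        have h2 : QQ r (n - r) a' b' ((j : ℕ)+1) = QQ r (n - r) a' b' ((j' : ℕ)+1) :=
          congrArg Fin.val hgij
        apply Fin.ext
        rcases lt_trichotomy (j : ℕ) (j' : ℕ) with h | h | h
        · exact absurd h2 (QQ_lt r (n - r) a' b' hr1 hab (by omega) (by
            have := j'.isLt; omega)).ne
        · exact h
        · exact absurd h2.symm (QQ_lt r (n - r) a' b' hr1 hab (by omega) (by
            have := j.isLt; omega)).ne
      · rw [RingHom.map_det, RingHom.mapMatrix_apply]
        rw [Matrix.det_of_upperTriangular (show Matrix.BlockTriangular _ id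
          from fun p q hlt => ?_)]
        · apply Finset.prod_ne_zero_iff.2
          intro j _
          simp only [Matrix.map_apply, Matrix.submatrix_apply, id_eq, Matrix.of_apply]
          rw [uEnt_diag2 K r (n - r) a' b' hr1 hs1 hab j.isLt, hb' j]
          simp only [map_mul, map_pow, MvPolynomial.eval_C, MvPolynomial.eval_X,
            Matrix.cons_val_zero]
          exact mul_ne_zero (pow_ne_zero _ (neg_ne_zero.2 one_ne_zero)) (pow_ne_zero _ hx)
        · have hqp : (q : ℕ) < (p : ℕ) := hlt
          simp only [Matrix.map_apply, Matrix.submatrix_apply, id_eq, Matrix.of_apply]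
          have hz : uEnt K r (n - r) a' b' (QQ r (n - r) a' b' ((p : ℕ)+1)) (q : ℕ) = 0 :=
            uEnt_zero K r (n - r) a' b' (fun hc => absurd hc.2
              (by have := QQ_lt r (n - r) a' b' hr1 hab
                    (show (q : ℕ)+1 < (p : ℕ)+1 by omega)
                    (show (p : ℕ)+1 ≤ (n - r) from p.isLt); omega))
          rw [hz, map_zero]
    · refine ⟨fun j => ⟨QQ r (n - r) a' b' (j : ℕ), by
        have := QQ_le r (n - r) a' b' (show (j : ℕ) ≤ (n - r) by have := j.isLt; omega);
        omega⟩, ?_, ?_⟩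
      · intro j j' hgij
        have h2 : QQ r (n - r) a' b' (j : ℕ) = QQ r (n - r) a' b' (j' : ℕ) :=
          congrArg Fin.val hgij
        apply Fin.ext
        rcases lt_trichotomy (j : ℕ) (j' : ℕ) with h | h | h
        · exact absurd h2 (QQ_lt r (n - r) a' b' hr1 hab h (by have := j'.isLt; omega)).ne
        · exact h
        · exact absurd h2.symm (QQ_lt r (n - r) a' b' hr1 hab h (by have := j.isLt; omega)).ne
      · rw [RingHom.map_det, RingHom.mapMatrix_apply]
        rw [Matrix.det_of_lowerTriangular _ (show Matrix.BlockTriangular _ OrderDual.toDual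
          from fun p q hlt => ?_)]
        · apply Finset.prod_ne_zero_iff.2
          intro j _
          simp only [Matrix.map_apply, Matrix.submatrix_apply, id_eq, Matrix.of_apply]
          rw [uEnt_diag1 K r (n - r) a' b' hr1 hs1 hab j.isLt, hb' j]
          simp only [map_mul, map_pow, MvPolynomial.eval_C, MvPolynomial.eval_X,
            Matrix.cons_val_one, Matrix.head_cons]
          exact mul_ne_zero (pow_ne_zero _ (neg_ne_zero.2 one_ne_zero)) (pow_ne_zero _ hy)
        · have hpq' : (p : Fin (n - r)) < q := OrderDual.toDual_lt_toDual.mp hlt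
          have hpq : (p : ℕ) < (q : ℕ) := hpq'
          simp only [Matrix.map_apply, Matrix.submatrix_apply, id_eq, Matrix.of_apply]
          have hz : uEnt K r (n - r) a' b' (QQ r (n - r) a' b' (p : ℕ)) (q : ℕ) = 0 :=
            uEnt_zero K r (n - r) a' b' (fun hc => absurd hc.1
              (by have := QQ_lt r (n - r) a' b' hr1 hab hpq
                    (show (q : ℕ) ≤ (n - r) by have := q.isLt; omega); omega))
          rw [hz, map_zero]
end

section
/- Let K be a field and let a_1 ≥ a_2 ≥ 0 and 0 ≤ b_1 ≤ b_2 be integers with a_1 + a_2 = b_1 + b_2 (whence necessarily a_1 ≥ b_1; assume b_1 ≤ a_1). In K[x,y], define the 2 × 4 matrix v with rows (x^{a_1}, y^{a_1}, 0, x^{a_1−b_1}y^{b_1}) and (0, x^{a_2}, y^{a_2}, 0), and the 4 × 2 matrix u with rows (−y^{b_1}, 0), (0, x^{a_1−b_1}y^{a_2}), (0, −x^{b_2}), (x^{b_1}, −y^{b_2}). Then: (1) v · u = 0; (2) the 2 × 2 minor of v on columns {1,2} equals x^{a_1+a_2} and the minor on columns {2,3} equals y^{a_1+a_2}; (3) the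 2 × 2 minor of u on rows {1,4} equals y^{b_1+b_2} and the minor on rows {3,4} equals x^{b_1+b_2}. In particular, v is surjective and u is injective as maps of sheaves on P^1, giving an exact sequence 0 → O(−b_1) ⊕ O(−b_2) →^u O^{⊕4} →^v O(a_1) ⊕ O(a_2) → 0. -/
open MvPolynomial

/-- the explicit matrices `v` and `u` realizing the exact sequence
`0 → O(-b_1) ⊕ O(-b_2) →ᵘ O^{⊕4} →ᵛ O(a_1) ⊕ O(a_2) → 0` satisfy
`v * u = 0`, the `2×2` minors of `v` on columns `{1,2}` and `{2,3}` are
`x^{a_1+a_2}` and `y^{a_1+a_2}`, and the `2×2` minors of `u` on rows `{1,4}`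
and `{3,4}` are `y^{b_1+b_2}` and `x^{b_1+b_2}`. -/
theorem stmt4 (K : Type*) [Field K] (a1 a2 b1 b2 : ℕ)
    (ha : a2 ≤ a1) (hb : b1 ≤ b2) (hsum : a1 + a2 = b1 + b2) (hb1 : b1 ≤ a1)
    (v : Matrix (Fin 2) (Fin 4) (MvPolynomial (Fin 2) K))
    (u : Matrix (Fin 4) (Fin 2) (MvPolynomial (Fin 2) K))
    (hv : v = !![X 0 ^ a1, X 1 ^ a1, 0, X 0 ^ (a1 - b1) * X 1 ^ b1;
                 0, X 0 ^ a2, X 1 ^ a2, 0])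
    (hu : u = !![-(X 1 ^ b1), 0;
                 0, X 0 ^ (a1 - b1) * X 1 ^ a2;
                 0, -(X 0 ^ b2);
                 X 0 ^ b1, -(X 1 ^ b2)]) :
    v * u = 0 ∧
    (v.submatrix id ![0, 1]).det = X 0 ^ (a1 + a2) ∧
    (v.submatrix id ![1, 2]).det = X 1 ^ (a1 + a2) ∧
    (u.submatrix ![0, 3] id).det = X 1 ^ (b1 + b2) ∧
    (u.submatrix ![2, 3] id).det = X 0 ^ (b1 + b2) := by
  subst hv hu
  have hx1 : (X 0 : MvPolynomial (Fin 2) K) ^ b1 * X 0 ^ (a1 - b1) = X 0 ^ a1 := by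
    rw [← pow_add]; congr 1; omega
  have hy1 : (X 1 : MvPolynomial (Fin 2) K) ^ a1 * X 1 ^ a2 = X 1 ^ b1 * X 1 ^ b2 := by
    rw [← pow_add, ← pow_add, hsum]
  have hx2 : (X 0 : MvPolynomial (Fin 2) K) ^ a2 * X 0 ^ (a1 - b1) = X 0 ^ b2 := by
    rw [← pow_add]; congr 1; omega
  refine ⟨?_, ?_, ?_, ?_, ?_⟩
  · refine Matrix.ext fun i j => ?_
    fin_cases i <;> fin_cases j <;>
      simp [Matrix.mul_apply, Fin.sum_univ_four] <;>
      first
        | linear_combination X 1 ^ b1 * hx1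
        | linear_combination X 0 ^ (a1 - b1) * hy1
        | linear_combination X 1 ^ a2 * hx2
        | ring1
  all_goals
    rw [Matrix.det_fin_two]
    simp [Matrix.det_fin_two, ← pow_add, hsum, mul_comm]
end

section
/- Let c_1 ≤ c_2 ≤ … ≤ c_6 be integers such that there is no integer λ with c_l = c_1 + (l−1)λ for all 1 ≤ l ≤ 6. Then the multiset {c_1, …, c_6} admits at most one 3 × 2 filling: any two 3 × 2 fillings of {c_1, …, c_6} are equal. -/
/-- The multiset of entries of an `r × m` integer matrix. -/
def Filling.entries {r m : ℕ} (A : Matrix (Fin r) (Fin m) ℤ) : Multiset ℤ :=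
  (Finset.univ : Finset (Fin r × Fin m)).val.map fun p => A p.1 p.2

/-- An `r × m` integer matrix `A` is a *filling* of a multiset `C` if its
multiset of entries is `C`, its entries are weakly increasing along every row
and every column, the difference between consecutive rows is independent of
the column, and the difference between consecutive columns is independent of
the row. -/
def IsFilling {r m : ℕ} (C : Multiset ℤ) (A : Matrix (Fin r) (Fin m) ℤ) : Prop :=
  Filling.entries A = C ∧
  (∀ i : Fin r, Monotone (A i)) ∧
  (∀ j : Fin m, Monotone fun i => A i j) ∧
  (∀ (i : ℕ) (hi : i + 1 < r) (j j' : Fin m),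
    A ⟨i + 1, hi⟩ j - A ⟨i, by omega⟩ j = A ⟨i + 1, hi⟩ j' - A ⟨i, by omega⟩ j') ∧
  (∀ (j : ℕ) (hj : j + 1 < m) (i i' : Fin r),
    A i ⟨j + 1, hj⟩ - A i ⟨j, by omega⟩ = A i' ⟨j + 1, hj⟩ - A i' ⟨j, by omega⟩)

/-- Two sorted six-element lists with equal multisets are equal elementwise. -/
lemma sorted_six (x1 x2 x3 x4 x5 x6 c1 c2 c3 c4 c5 c6 : ℤ)
    (hx12 : x1 ≤ x2) (hx23 : x2 ≤ x3) (hx34 : x3 ≤ x4) (hx45 : x4 ≤ x5) (hx56 : x5 ≤ x6)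
    (hc12 : c1 ≤ c2) (hc23 : c2 ≤ c3) (hc34 : c3 ≤ c4) (hc45 : c4 ≤ c5) (hc56 : c5 ≤ c6)
    (h : ({x1,x2,x3,x4,x5,x6} : Multiset ℤ) = {c1,c2,c3,c4,c5,c6}) :
    x1 = c1 ∧ x2 = c2 ∧ x3 = c3 ∧ x4 = c4 ∧ x5 = c5 ∧ x6 = c6 := by
  have hp : [x1,x2,x3,x4,x5,x6].Perm [c1,c2,c3,c4,c5,c6] :=
    Multiset.coe_eq_coe.mp h
  have hs1 : [x1,x2,x3,x4,x5,x6].Pairwise (· ≤ ·) := by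
    simp [List.pairwise_cons]; omega
  have hs2 : [c1,c2,c3,c4,c5,c6].Pairwise (· ≤ ·) := by
    simp [List.pairwise_cons]; omega
  have := List.Perm.eq_of_pairwise' hs1 hs2 hp
  simp at this
  tauto

/-- Case analysis: the possible matchings between the parameters of a filling
and the sorted multiset. -/
lemma param_cases (a d e1 e2 c1 c2 c3 c4 c5 c6 : ℤ)
    (hd : 0 ≤ d) (he1 : 0 ≤ e1) (he2 : 0 ≤ e2)
    (hc12 : c1 ≤ c2) (hc23 : c2 ≤ c3) (hc34 : c3 ≤ c4) (hc45 : c4 ≤ c5) (hc56 : c5 ≤ c6)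
    (h : ({a, a+d, a+e1, a+e1+d, a+e1+e2, a+e1+e2+d} : Multiset ℤ) = {c1,c2,c3,c4,c5,c6}) :
    (a = c1 ∧ a+d = c2 ∧ a+e1 = c3 ∧ a+e1+d = c4 ∧ a+e1+e2 = c5 ∧ a+e1+e2+d = c6) ∨
    (a = c1 ∧ a+d = c2 ∧ a+e1 = c3 ∧ a+e1+e2 = c4 ∧ a+e1+d = c5 ∧ a+e1+e2+d = c6) ∨
    (a = c1 ∧ a+e1 = c2 ∧ a+d = c3 ∧ a+e1+d = c4 ∧ a+e1+e2 = c5 ∧ a+e1+e2+d = c6) ∨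
    (a = c1 ∧ a+e1 = c2 ∧ a+d = c3 ∧ a+e1+e2 = c4 ∧ a+e1+d = c5 ∧ a+e1+e2+d = c6) ∨
    (a = c1 ∧ a+e1 = c2 ∧ a+e1+e2 = c3 ∧ a+d = c4 ∧ a+e1+d = c5 ∧ a+e1+e2+d = c6) := by
  rcases le_total d e1 with h1 | h1
  · rcases le_total (e1+d) (e1+e2) with h2 | h2
    · left
      exact sorted_six _ _ _ _ _ _ _ _ _ _ _ _ (by omega) (by omega) (by omega) (by omega)
        (by omega) hc12 hc23 hc34 hc45 hc56 h
    · right; left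
      have hp : [a, a+d, a+e1, a+e1+e2, a+e1+d, a+e1+e2+d].Perm
          [a, a+d, a+e1, a+e1+d, a+e1+e2, a+e1+e2+d] :=
        .cons _ (.cons _ (.cons _ (.swap _ _ _)))
      exact sorted_six _ _ _ _ _ _ _ _ _ _ _ _ (by omega) (by omega) (by omega) (by omega)
        (by omega) hc12 hc23 hc34 hc45 hc56 ((Multiset.coe_eq_coe.mpr hp).trans h)
  · rcases le_total (e1+d) (e1+e2) with h2 | h2
    · right; right; left
      have hp : [a, a+e1, a+d, a+e1+d, a+e1+e2, a+e1+e2+d].Perm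
          [a, a+d, a+e1, a+e1+d, a+e1+e2, a+e1+e2+d] :=
        .cons _ (.swap _ _ _)
      exact sorted_six _ _ _ _ _ _ _ _ _ _ _ _ (by omega) (by omega) (by omega) (by omega)
        (by omega) hc12 hc23 hc34 hc45 hc56 ((Multiset.coe_eq_coe.mpr hp).trans h)
    · rcases le_total d (e1+e2) with h3 | h3
      · right; right; right; left
        have hp : [a, a+e1, a+d, a+e1+e2, a+e1+d, a+e1+e2+d].Perm
            [a, a+d, a+e1, a+e1+d, a+e1+e2, a+e1+e2+d] :=
          .cons _ ((List.Perm.swap _ _ _).trans (.cons _ (.cons _ (.swap _ _ _))))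
        exact sorted_six _ _ _ _ _ _ _ _ _ _ _ _ (by omega) (by omega) (by omega) (by omega)
          (by omega) hc12 hc23 hc34 hc45 hc56 ((Multiset.coe_eq_coe.mpr hp).trans h)
      · right; right; right; right
        have hp : [a, a+e1, a+e1+e2, a+d, a+e1+d, a+e1+e2+d].Perm
            [a, a+d, a+e1, a+e1+d, a+e1+e2, a+e1+e2+d] :=
          .cons _ ((List.Perm.cons _ (.swap _ _ _)).trans
            ((List.Perm.swap _ _ _).trans (.cons _ (.cons _ (.swap _ _ _)))))
        exact sorted_six _ _ _ _ _ _ _ _ _ _ _ _ (by omega) (by omega) (by omega) (by omega)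
          (by omega) hc12 hc23 hc34 hc45 hc56 ((Multiset.coe_eq_coe.mpr hp).trans h)

/-- Extraction: the entries of a `3 × 2` filling match the sorted multiset in
one of five possible ways. -/
lemma extract_filling (c1 c2 c3 c4 c5 c6 : ℤ)
    (h12 : c1 ≤ c2) (h23 : c2 ≤ c3) (h34 : c3 ≤ c4) (h45 : c4 ≤ c5) (h56 : c5 ≤ c6)
    (A : Matrix (Fin 3) (Fin 2) ℤ)
    (hA : IsFilling ({c1, c2, c3, c4, c5, c6} : Multiset ℤ) A) :
    (A 1 1 - A 1 0 = A 0 1 - A 0 0) ∧ (A 2 1 - A 2 0 = A 0 1 - A 0 0) ∧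
    ((A 0 0 = c1 ∧ A 0 1 = c2 ∧ A 1 0 = c3 ∧ A 1 1 = c4 ∧ A 2 0 = c5 ∧ A 2 1 = c6) ∨
     (A 0 0 = c1 ∧ A 0 1 = c2 ∧ A 1 0 = c3 ∧ A 2 0 = c4 ∧ A 1 1 = c5 ∧ A 2 1 = c6) ∨
     (A 0 0 = c1 ∧ A 1 0 = c2 ∧ A 0 1 = c3 ∧ A 1 1 = c4 ∧ A 2 0 = c5 ∧ A 2 1 = c6) ∨
     (A 0 0 = c1 ∧ A 1 0 = c2 ∧ A 0 1 = c3 ∧ A 2 0 = c4 ∧ A 1 1 = c5 ∧ A 2 1 = c6) ∨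
     (A 0 0 = c1 ∧ A 1 0 = c2 ∧ A 2 0 = c3 ∧ A 0 1 = c4 ∧ A 1 1 = c5 ∧ A 2 1 = c6)) := by
  obtain ⟨hAe, hrow, hcol, -, hcd⟩ := hA
  have k1 : A 1 1 - A 1 0 = A 0 1 - A 0 0 := hcd 0 (by norm_num) 1 0
  have k2 : A 2 1 - A 2 0 = A 0 1 - A 0 0 := hcd 0 (by norm_num) 2 0
  have m1 : A 0 0 ≤ A 0 1 := hrow 0 (by decide : (0:Fin 2) ≤ 1)
  have m2 : A 0 0 ≤ A 1 0 := hcol 0 (by decide : (0:Fin 3) ≤ 1)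
  have m3 : A 1 0 ≤ A 2 0 := hcol 0 (by decide : (1:Fin 3) ≤ 2)
  have hA' : ({A 0 0, A 0 1, A 1 0, A 1 1, A 2 0, A 2 1} : Multiset ℤ)
      = {c1, c2, c3, c4, c5, c6} := hAe
  rw [show A 1 1 = A 1 0 + (A 0 1 - A 0 0) by omega,
      show A 2 1 = A 2 0 + (A 0 1 - A 0 0) by omega] at hA'
  have hA2 : ({A 0 0, A 0 0 + (A 0 1 - A 0 0), A 0 0 + (A 1 0 - A 0 0),
      A 0 0 + (A 1 0 - A 0 0) + (A 0 1 - A 0 0),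
      A 0 0 + (A 1 0 - A 0 0) + (A 2 0 - A 1 0),
      A 0 0 + (A 1 0 - A 0 0) + (A 2 0 - A 1 0) + (A 0 1 - A 0 0)} : Multiset ℤ)
      = {c1, c2, c3, c4, c5, c6} := by
    rw [← hA']; ring_nf
  have D := param_cases (A 0 0) (A 0 1 - A 0 0) (A 1 0 - A 0 0) (A 2 0 - A 1 0)
    c1 c2 c3 c4 c5 c6 (by omega) (by omega) (by omega) h12 h23 h34 h45 h56 hA2
  refine ⟨k1, k2, ?_⟩
  rcases D with D|D|D|D|D
  · left; omega
  · right; left; omega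
  · right; right; left; omega
  · right; right; right; left; omega
  · right; right; right; right; omega

/-- if `c_1 ≤ … ≤ c_6` is not an arithmetic progression
`c_l = c_1 + (l-1)λ`, then the multiset `{c_1, …, c_6}` admits at most one
`3 × 2` filling. -/
theorem stmt13 (c1 c2 c3 c4 c5 c6 : ℤ)
    (h12 : c1 ≤ c2) (h23 : c2 ≤ c3) (h34 : c3 ≤ c4) (h45 : c4 ≤ c5) (h56 : c5 ≤ c6)
    (hnot : ¬ ∃ lam : ℤ, c2 = c1 + lam ∧ c3 = c1 + 2 * lam ∧ c4 = c1 + 3 * lam ∧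
      c5 = c1 + 4 * lam ∧ c6 = c1 + 5 * lam)
    (A B : Matrix (Fin 3) (Fin 2) ℤ)
    (hA : IsFilling ({c1, c2, c3, c4, c5, c6} : Multiset ℤ) A)
    (hB : IsFilling ({c1, c2, c3, c4, c5, c6} : Multiset ℤ) B) :
    A = B := by
  have hnot' : ¬(c2 - c1 = c3 - c2 ∧ c3 - c2 = c4 - c3 ∧ c4 - c3 = c5 - c4 ∧
      c5 - c4 = c6 - c5) := fun ⟨u, v, w, x⟩ => hnot ⟨c2 - c1, by omega⟩
  obtain ⟨kA1, kA2, DA⟩ := extract_filling c1 c2 c3 c4 c5 c6 h12 h23 h34 h45 h56 A hA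
  obtain ⟨kB1, kB2, DB⟩ := extract_filling c1 c2 c3 c4 c5 c6 h12 h23 h34 h45 h56 B hB
  have e1 : A 0 0 = B 0 0 := by omega
  have e2 : A 0 1 = B 0 1 := by omega
  have e3 : A 1 0 = B 1 0 := by omega
  have e4 : A 1 1 = B 1 1 := by omega
  have e5 : A 2 0 = B 2 0 := by omega
  have e6 : A 2 1 = B 2 1 := by omega
  funext i j
  fin_cases i <;> fin_cases j <;> assumption
end

section
/- Let c be an integer and λ ≥ 1 an integer, and let 0 ≤ a_1 ≤ a_2 ≤ a_3 and 0 ≤ b_1 ≤ b_2 be integers such that the multiset {a_i + b_j : 1 ≤ i ≤ 3, 1 ≤ j ≤ 2} equals {c, c+λ, c+2λ, c+3λ, c+4λ, c+5λ}. Suppose 0 ≤ a′_1 ≤ a′_2 ≤ a′_3 and 0 ≤ b′_1 ≤ b′_2 are integers with a′_1+a′_2+a′_3 = a_1+a_2+a_3, b′_1+b′_2 = b_1+b_2, a′_3 ≥ a_3, a′_3 + a′_2 ≥ a_3 + a_2, and b′_2 ≥ b_2, such that the multiset {a′_i + b′_j} also equals {c, c+λ, …, c+5λ}. Then a′_i =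 a_i for all i and b′_j = b_j for all j. (Both fillings of the arithmetic-progression splitting type in the 3 × 2 case are minimal.) -/
set_option maxHeartbeats 1000000

lemma stmt15_helper (c lam a1 a2 a3 b1 b2 : ℤ) (hlam : 1 ≤ lam)
    (ha12 : a1 ≤ a2) (ha23 : a2 ≤ a3) (hb12 : b1 ≤ b2)
    (hC : ({a1 + b1, a1 + b2, a2 + b1, a2 + b2, a3 + b1, a3 + b2} : Multiset ℤ)
      = {c, c + lam, c + 2 * lam, c + 3 * lam, c + 4 * lam, c + 5 * lam}) :
    (a1 + b1 = c ∧ a2 = a1 + 2*lam ∧ a3 = a1 + 4*lam ∧ b2 = b1 + lam) ∨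
    (a1 + b1 = c ∧ a2 = a1 + lam ∧ a3 = a1 + 2*lam ∧ b2 = b1 + 3*lam) := by
  have m1 : (a1 + b1) ∈ ({c, c + lam, c + 2 * lam, c + 3 * lam, c + 4 * lam, c + 5 * lam} : Multiset ℤ) := by
    rw [← hC]; simp
  have m2 : (a1 + b2) ∈ ({c, c + lam, c + 2 * lam, c + 3 * lam, c + 4 * lam, c + 5 * lam} : Multiset ℤ) := by
    rw [← hC]; simp
  have m3 : (a2 + b1) ∈ ({c, c + lam, c + 2 * lam, c + 3 * lam, c + 4 * lam, c + 5 * lam} : Multiset ℤ) := by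
    rw [← hC]; simp
  have m6 : (a3 + b2) ∈ ({c, c + lam, c + 2 * lam, c + 3 * lam, c + 4 * lam, c + 5 * lam} : Multiset ℤ) := by
    rw [← hC]; simp
  have mc : c ∈ ({a1 + b1, a1 + b2, a2 + b1, a2 + b2, a3 + b1, a3 + b2} : Multiset ℤ) := by
    rw [hC]; simp
  have mc1 : c + lam ∈ ({a1 + b1, a1 + b2, a2 + b1, a2 + b2, a3 + b1, a3 + b2} : Multiset ℤ) := by
    rw [hC]; simp
  have mc5 : c + 5 * lam ∈ ({a1 + b1, a1 + b2, a2 + b1, a2 + b2, a3 + b1, a3 + b2} : Multiset ℤ) := by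
    rw [hC]; simp
  have hsum := congrArg Multiset.sum hC
  simp only [Multiset.insert_eq_cons, Multiset.sum_cons, Multiset.sum_singleton] at hsum
  simp only [Multiset.insert_eq_cons, Multiset.mem_cons, Multiset.mem_singleton] at m1 m2 m3 m6 mc mc1 mc5
  have e1 : a1 + b1 = c := by clear m2 m3 m6 mc1 mc5 hsum; omega
  have e2 : a3 + b2 = c + 5 * lam := by clear m1 m2 m3 mc mc1 hsum e1; omega
  clear m1 m6 mc mc5 hC
  omega

/-- minimality of both fillings of the arithmetic-progression
splitting type in the `3 × 2` case: if `(a'_•, b'_•)` dominates `(a_•, b_•)`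
in the polygonal-line order (same sums, `a'_3 ≥ a_3`, `a'_3 + a'_2 ≥ a_3 + a_2`,
`b'_2 ≥ b_2`) and the multiset of pairwise sums is again
`{c, c+λ, …, c+5λ}`, then `a' = a` and `b' = b`. -/
theorem stmt15 (c lam : ℤ) (hlam : 1 ≤ lam)
    (a1 a2 a3 b1 b2 a1' a2' a3' b1' b2' : ℤ)
    (ha0 : 0 ≤ a1) (ha12 : a1 ≤ a2) (ha23 : a2 ≤ a3)
    (hb0 : 0 ≤ b1) (hb12 : b1 ≤ b2)
    (hC : ({a1 + b1, a1 + b2, a2 + b1, a2 + b2, a3 + b1, a3 + b2} : Multiset ℤ)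
      = {c, c + lam, c + 2 * lam, c + 3 * lam, c + 4 * lam, c + 5 * lam})
    (ha0' : 0 ≤ a1') (ha12' : a1' ≤ a2') (ha23' : a2' ≤ a3')
    (hb0' : 0 ≤ b1') (hb12' : b1' ≤ b2')
    (hsa : a1' + a2' + a3' = a1 + a2 + a3) (hsb : b1' + b2' = b1 + b2)
    (hd3 : a3 ≤ a3') (hd32 : a3 + a2 ≤ a3' + a2') (hdb : b2 ≤ b2')
    (hC' : ({a1' + b1', a1' + b2', a2' + b1', a2' + b2', a3' + b1', a3' + b2'}
        : Multiset ℤ)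
      = {c, c + lam, c + 2 * lam, c + 3 * lam, c + 4 * lam, c + 5 * lam}) :
    a1' = a1 ∧ a2' = a2 ∧ a3' = a3 ∧ b1' = b1 ∧ b2' = b2 := by
  have h1 := stmt15_helper c lam a1 a2 a3 b1 b2 hlam ha12 ha23 hb12 hC
  have h2 := stmt15_helper c lam a1' a2' a3' b1' b2' hlam ha12' ha23' hb12' hC'
  omega
end

section
/- Let c be an integer and λ ≥ 1 an integer. Then a 4 × 2 integer matrix is a filling of the multiset {c, c, c+λ, c+λ, c+2λ, c+2λ, c+3λ, c+3λ} (each of the four values c, c+λ, c+2λ, c+3λ occurring twice) if and only if it equals one of the three matrices [[c, c], [c+λ, c+λ], [c+2λ, c+2λ], [c+3λ, c+3λ]], [[c, c+λ], [c, c+λ], [c+2λ, c+3λ], [c+2λ, c+3λ]], or [[c, c+2λ], [c, c+2λ], [c+λ, c+3λ], [c+λ, c+3λ]]. -/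
set_option maxHeartbeats 1000000 in
lemma stmt16_aux (c lam x00 x01 x10 x11 x20 x21 x30 x31 : ℤ) (hlam : 1 ≤ lam)
 (h00 : x00 = c ∨ x00 = c + lam ∨ x00 = c + 2*lam ∨ x00 = c + 3*lam)
 (h01 : x01 = c ∨ x01 = c + lam ∨ x01 = c + 2*lam ∨ x01 = c + 3*lam)
 (h10 : x10 = c ∨ x10 = c + lam ∨ x10 = c + 2*lam ∨ x10 = c + 3*lam)
 (h11 : x11 = c ∨ x11 = c + lam ∨ x11 = c + 2*lam ∨ x11 = c + 3*lam)
 (h20 : x20 = c ∨ x20 = c + lam ∨ x20 = c + 2*lam ∨ x20 = c + 3*lam)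
 (h21 : x21 = c ∨ x21 = c + lam ∨ x21 = c + 2*lam ∨ x21 = c + 3*lam)
 (h30 : x30 = c ∨ x30 = c + lam ∨ x30 = c + 2*lam ∨ x30 = c + 3*lam)
 (h31 : x31 = c ∨ x31 = c + lam ∨ x31 = c + 2*lam ∨ x31 = c + 3*lam)
 (hv0 : c = x00 ∨ c = x01 ∨ c = x10 ∨ c = x11 ∨ c = x20 ∨ c = x21 ∨ c = x30 ∨ c = x31)
 (hv1 : c + lam = x00 ∨ c + lam = x01 ∨ c + lam = x10 ∨ c + lam = x11 ∨ c + lam = x20 ∨ c + lam = x21 ∨ c + lam = x30 ∨ c + lam = x31)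
 (hv2 : c + 2*lam = x00 ∨ c + 2*lam = x01 ∨ c + 2*lam = x10 ∨ c + 2*lam = x11 ∨ c + 2*lam = x20 ∨ c + 2*lam = x21 ∨ c + 2*lam = x30 ∨ c + 2*lam = x31)
 (hv3 : c + 3*lam = x00 ∨ c + 3*lam = x01 ∨ c + 3*lam = x10 ∨ c + 3*lam = x11 ∨ c + 3*lam = x20 ∨ c + 3*lam = x21 ∨ c + 3*lam = x30 ∨ c + 3*lam = x31)
 (hsum : x00+x01+x10+x11+x20+x21+x30+x31 = 8*c + 12*lam)
 (hmin : min x00 (c+lam) + min x01 (c+lam) + min x10 (c+lam) + min x11 (c+lam)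
   + min x20 (c+lam) + min x21 (c+lam) + min x30 (c+lam) + min x31 (c+lam) = 8*c + 6*lam)
 (r0 : x00 ≤ x01) (r1 : x10 ≤ x11) (r2 : x20 ≤ x21) (r3 : x30 ≤ x31)
 (c00 : x00 ≤ x10) (c01 : x10 ≤ x20) (c02 : x20 ≤ x30)
 (c10 : x01 ≤ x11) (c11 : x11 ≤ x21) (c12 : x21 ≤ x31)
 (d0 : x10 - x00 = x11 - x01) (d1 : x20 - x10 = x21 - x11) (d2 : x30 - x20 = x31 - x21)
 (e0 : x01 - x00 = x11 - x10) (e1 : x01 - x00 = x21 - x20) (e2 : x01 - x00 = x31 - x30) :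
    (x00 = c ∧ x01 = c ∧ x10 = c + lam ∧ x11 = c + lam ∧
     x20 = c + 2*lam ∧ x21 = c + 2*lam ∧ x30 = c + 3*lam ∧ x31 = c + 3*lam) ∨
    (x00 = c ∧ x01 = c + lam ∧ x10 = c ∧ x11 = c + lam ∧
     x20 = c + 2*lam ∧ x21 = c + 3*lam ∧ x30 = c + 2*lam ∧ x31 = c + 3*lam) ∨
    (x00 = c ∧ x01 = c + 2*lam ∧ x10 = c ∧ x11 = c + 2*lam ∧
     x20 = c + lam ∧ x21 = c + 3*lam ∧ x30 = c + lam ∧ x31 = c + 3*lam) := by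
  have hx00 : x00 = c := by
    clear hmin hv1 hv2 hsum h01 h10 h11 h20 h21 h30
    rcases hv0 with h|h|h|h|h|h|h|h <;> omega
  have hx31 : x31 = c + 3*lam := by
    clear hmin hv0 hv1 hv2 hsum h00 h01 h10 h11 h20 h21
    rcases hv3 with h|h|h|h|h|h|h|h <;> omega
  clear hv0 hv3 h00 h31
  rcases h01 with h|h|h|h <;> rcases h10 with g|g|g|g <;> rcases h20 with f|f|f|f <;>
    first
      | solve | (clear hmin hv1 hv2; exfalso; omega)
      | solve | (clear hmin hv1 hv2; left; omega)
      | solve | (clear hmin hv1 hv2; right; left; omega)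
      | solve | (clear hmin hv1 hv2; right; right; omega)
      | solve | (exfalso; clear hmin hv2; rcases hv1 with m|m|m|m|m|m|m|m <;> omega)
      | (exfalso; clear hv1 hv2; omega)

lemma perm8 (a b d e : ℤ) : ([a,b,a,b,d,e,d,e] : List ℤ).Perm [a,a,b,b,d,d,e,e] := by
  refine .cons a (.trans (.swap a b _) (.cons a (.cons b ?_)))
  exact .cons b (.cons d (.trans (.swap d e _) (.cons d (.cons e (.refl _)))))



set_option maxHeartbeats 4000000 in
/-- a `4 × 2` matrix is a filling of the multiset
`{c, c, c+λ, c+λ, c+2λ, c+2λ, c+3λ, c+3λ}` (with `λ ≥ 1`) iff it is one of the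
three matrices `[[c, c], [c+λ, c+λ], [c+2λ, c+2λ], [c+3λ, c+3λ]]`,
`[[c, c+λ], [c, c+λ], [c+2λ, c+3λ], [c+2λ, c+3λ]]`, or
`[[c, c+2λ], [c, c+2λ], [c+λ, c+3λ], [c+λ, c+3λ]]`. -/
theorem stmt16 (c lam : ℤ) (hlam : 1 ≤ lam) :
    ∀ A : Matrix (Fin 4) (Fin 2) ℤ,
      IsFilling ({c, c, c + lam, c + lam, c + 2 * lam, c + 2 * lam,
          c + 3 * lam, c + 3 * lam} : Multiset ℤ) A ↔
        A = !![c, c; c + lam, c + lam; c + 2 * lam, c + 2 * lam;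
               c + 3 * lam, c + 3 * lam] ∨
        A = !![c, c + lam; c, c + lam; c + 2 * lam, c + 3 * lam;
               c + 2 * lam, c + 3 * lam] ∨
        A = !![c, c + 2 * lam; c, c + 2 * lam; c + lam, c + 3 * lam;
               c + lam, c + 3 * lam] := by
  intro A
  constructor
  · rintro ⟨hE, hrow, hcol, hrd, hcd⟩
    have hE' : (↑[A 0 0, A 0 1, A 1 0, A 1 1, A 2 0, A 2 1, A 3 0, A 3 1] : Multiset ℤ) =
        ({c, c, c + lam, c + lam, c + 2 * lam, c + 2 * lam,
          c + 3 * lam, c + 3 * lam} : Multiset ℤ) := hE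
    have hmem : ∀ x ∈ (↑[A 0 0, A 0 1, A 1 0, A 1 1, A 2 0, A 2 1, A 3 0, A 3 1] : Multiset ℤ),
        x = c ∨ x = c + lam ∨ x = c + 2 * lam ∨ x = c + 3 * lam := by
      intro x hx
      rw [hE'] at hx
      simpa using hx
    have h00 := hmem (A 0 0) (by simp)
    have h01 := hmem (A 0 1) (by simp)
    have h10 := hmem (A 1 0) (by simp)
    have h11 := hmem (A 1 1) (by simp)
    have h20 := hmem (A 2 0) (by simp)
    have h21 := hmem (A 2 1) (by simp)
    have h30 := hmem (A 3 0) (by simp)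
    have h31 := hmem (A 3 1) (by simp)
    have hv0 : c ∈ (↑[A 0 0, A 0 1, A 1 0, A 1 1, A 2 0, A 2 1, A 3 0, A 3 1] : Multiset ℤ) := by
      rw [hE']; simp
    have hv1 : c + lam ∈ (↑[A 0 0, A 0 1, A 1 0, A 1 1, A 2 0, A 2 1, A 3 0, A 3 1] : Multiset ℤ) := by
      rw [hE']; simp
    have hv2 : c + 2 * lam ∈ (↑[A 0 0, A 0 1, A 1 0, A 1 1, A 2 0, A 2 1, A 3 0, A 3 1] : Multiset ℤ) := by
      rw [hE']; simp
    have hv3 : c + 3 * lam ∈ (↑[A 0 0, A 0 1, A 1 0, A 1 1, A 2 0, A 2 1, A 3 0, A 3 1] : Multiset ℤ) := by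
      rw [hE']; simp
    simp only [Multiset.mem_coe, List.mem_cons, List.mem_singleton, List.not_mem_nil, or_false] at hv0 hv1 hv2 hv3
    have hsum := congrArg Multiset.sum hE'
    simp [Multiset.sum_cons] at hsum
    have hminsum := congrArg (fun M : Multiset ℤ => (M.map (fun x => min x (c + lam))).sum) hE'
    simp only [Multiset.map_coe, Multiset.map_cons, Multiset.map_singleton, List.map_cons,
      List.map_nil, Multiset.sum_coe, List.sum_cons, List.sum_nil, Multiset.insert_eq_cons,
      Multiset.map_cons, Multiset.sum_cons, Multiset.map_zero, Multiset.sum_zero,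
      Multiset.map_singleton, Multiset.sum_singleton] at hminsum
    rw [show min c (c + lam) = c by omega, show min (c + lam) (c + lam) = c + lam by omega,
      show min (c + 2 * lam) (c + lam) = c + lam by omega,
      show min (c + 3 * lam) (c + lam) = c + lam by omega] at hminsum
    have r0 : A 0 0 ≤ A 0 1 := hrow 0 (by decide)
    have r1 : A 1 0 ≤ A 1 1 := hrow 1 (by decide)
    have r2 : A 2 0 ≤ A 2 1 := hrow 2 (by decide)
    have r3 : A 3 0 ≤ A 3 1 := hrow 3 (by decide)
    have c00 : A 0 0 ≤ A 1 0 := hcol 0 (show (0:Fin 4) ≤ 1 by decide)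
    have c01 : A 1 0 ≤ A 2 0 := hcol 0 (show (1:Fin 4) ≤ 2 by decide)
    have c02 : A 2 0 ≤ A 3 0 := hcol 0 (show (2:Fin 4) ≤ 3 by decide)
    have c10 : A 0 1 ≤ A 1 1 := hcol 1 (show (0:Fin 4) ≤ 1 by decide)
    have c11 : A 1 1 ≤ A 2 1 := hcol 1 (show (1:Fin 4) ≤ 2 by decide)
    have c12 : A 2 1 ≤ A 3 1 := hcol 1 (show (2:Fin 4) ≤ 3 by decide)
    have d0 : A 1 0 - A 0 0 = A 1 1 - A 0 1 := hrd 0 (by norm_num) 0 1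
    have d1 : A 2 0 - A 1 0 = A 2 1 - A 1 1 := hrd 1 (by norm_num) 0 1
    have d2 : A 3 0 - A 2 0 = A 3 1 - A 2 1 := hrd 2 (by norm_num) 0 1
    have e0 : A 0 1 - A 0 0 = A 1 1 - A 1 0 := hcd 0 (by norm_num) 0 1
    have e1 : A 0 1 - A 0 0 = A 2 1 - A 2 0 := hcd 0 (by norm_num) 0 2
    have e2 : A 0 1 - A 0 0 = A 3 1 - A 3 0 := hcd 0 (by norm_num) 0 3
    have hsum2 : A 0 0 + A 0 1 + A 1 0 + A 1 1 + A 2 0 + A 2 1 + A 3 0 + A 3 1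
        = 8*c + 12*lam := by
      clear hmem h00 h01 h10 h11 h20 h21 h30 h31 hv0 hv1 hv2 hv3 hminsum
      omega
    have hmin2 : min (A 0 0) (c+lam) + min (A 0 1) (c+lam) + min (A 1 0) (c+lam)
        + min (A 1 1) (c+lam) + min (A 2 0) (c+lam) + min (A 2 1) (c+lam)
        + min (A 3 0) (c+lam) + min (A 3 1) (c+lam) = 8*c + 6*lam := by
      clear hmem h00 h01 h10 h11 h20 h21 h30 h31 hv0 hv1 hv2 hv3 hsum hsum2
      omega
    have key := stmt16_aux c lam (A 0 0) (A 0 1) (A 1 0) (A 1 1) (A 2 0) (A 2 1) (A 3 0) (A 3 1)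
      hlam h00 h01 h10 h11 h20 h21 h30 h31 hv0 hv1 hv2 hv3 hsum2 hmin2
      r0 r1 r2 r3 c00 c01 c02 c10 c11 c12 d0 d1 d2 e0 e1 e2
    rcases key with ⟨k1,k2,k3,k4,k5,k6,k7,k8⟩ | ⟨k1,k2,k3,k4,k5,k6,k7,k8⟩ | ⟨k1,k2,k3,k4,k5,k6,k7,k8⟩
    · left
      ext i j
      fin_cases i <;> fin_cases j <;>
        simp [Matrix.cons_val_zero, Matrix.cons_val_one, Matrix.head_cons] <;> assumption
    · right; left
      ext i j
      fin_cases i <;> fin_cases j <;>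
        simp [Matrix.cons_val_zero, Matrix.cons_val_one, Matrix.head_cons] <;> assumption
    · right; right
      ext i j
      fin_cases i <;> fin_cases j <;>
        simp [Matrix.cons_val_zero, Matrix.cons_val_one, Matrix.head_cons] <;> assumption
  · rintro (rfl | rfl | rfl) <;>
      refine ⟨?_, ?_, ?_, ?_, ?_⟩
    · rfl
    · intro i a b hab
      fin_cases i <;> fin_cases a <;> fin_cases b <;>
        first
          | exact absurd hab (by decide)
          | solve | (simp [Matrix.vecHead, Matrix.vecTail]; try omega)
    · intro j a b hab
      fin_cases j <;> fin_cases a <;> fin_cases b <;>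
        first
          | exact absurd hab (by decide)
          | solve | (simp [Matrix.vecHead, Matrix.vecTail]; try omega)
    · intro i hi j j'
      rcases i with _|_|_|i
      · fin_cases j <;> fin_cases j' <;> solve | rfl | (simp [Matrix.vecHead, Matrix.vecTail]; try ring)
      · fin_cases j <;> fin_cases j' <;> solve | rfl | (simp [Matrix.vecHead, Matrix.vecTail]; try ring)
      · fin_cases j <;> fin_cases j' <;> solve | rfl | (simp [Matrix.vecHead, Matrix.vecTail]; try ring)
      · omega
    · intro j hj i i'
      rcases j with _|j
      · fin_cases i <;> fin_cases i' <;> solve | rfl | (simp [Matrix.vecHead, Matrix.vecTail]; try ring)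
      · omega
    · show (↑[c, c+lam, c, c+lam, c+2*lam, c+3*lam, c+2*lam, c+3*lam] : Multiset ℤ) = _
      exact Multiset.coe_eq_coe.mpr (perm8 c (c+lam) (c+2*lam) (c+3*lam))
    · intro i a b hab
      fin_cases i <;> fin_cases a <;> fin_cases b <;>
        first
          | exact absurd hab (by decide)
          | solve | (simp [Matrix.vecHead, Matrix.vecTail]; try omega)
    · intro j a b hab
      fin_cases j <;> fin_cases a <;> fin_cases b <;>
        first
          | exact absurd hab (by decide)
          | solve | (simp [Matrix.vecHead, Matrix.vecTail]; try omega)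
    · intro i hi j j'
      rcases i with _|_|_|i
      · fin_cases j <;> fin_cases j' <;> solve | rfl | (simp [Matrix.vecHead, Matrix.vecTail]; try ring)
      · fin_cases j <;> fin_cases j' <;> solve | rfl | (simp [Matrix.vecHead, Matrix.vecTail]; try ring)
      · fin_cases j <;> fin_cases j' <;> solve | rfl | (simp [Matrix.vecHead, Matrix.vecTail]; try ring)
      · omega
    · intro j hj i i'
      rcases j with _|j
      · fin_cases i <;> fin_cases i' <;> solve | rfl | (simp [Matrix.vecHead, Matrix.vecTail]; try ring)
      · omega
    · show (↑[c, c+2*lam, c, c+2*lam, c+lam, c+3*lam, c+lam, c+3*lam] : Multiset ℤ) = _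
      have := Multiset.coe_eq_coe.mpr (perm8 c (c+2*lam) (c+lam) (c+3*lam))
      -- gives {c,c,c+2λ,c+2λ,c+λ,c+λ,c+3λ,c+3λ}; need reorder with target
      rw [this]
      refine Multiset.coe_eq_coe.mpr ?_
      -- [c,c,c+2λ,c+2λ,c+λ,c+λ,c+3λ,c+3λ] ~ [c,c,c+λ,c+λ,c+2λ,c+2λ,c+3λ,c+3λ]
      refine .cons _ (.cons _ ?_)
      exact (List.perm_append_comm (l₁ := [c+2*lam, c+2*lam]) (l₂ := [c+lam, c+lam])).append_right _
    · intro i a b hab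
      fin_cases i <;> fin_cases a <;> fin_cases b <;>
        first
          | exact absurd hab (by decide)
          | solve | (simp [Matrix.vecHead, Matrix.vecTail]; try omega)
    · intro j a b hab
      fin_cases j <;> fin_cases a <;> fin_cases b <;>
        first
          | exact absurd hab (by decide)
          | solve | (simp [Matrix.vecHead, Matrix.vecTail]; try omega)
    · intro i hi j j'
      rcases i with _|_|_|i
      · fin_cases j <;> fin_cases j' <;> solve | rfl | (simp [Matrix.vecHead, Matrix.vecTail]; try ring)
      · fin_cases j <;> fin_cases j' <;> solve | rfl | (simp [Matrix.vecHead, Matrix.vecTail]; try ring)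
      · fin_cases j <;> fin_cases j' <;> solve | rfl | (simp [Matrix.vecHead, Matrix.vecTail]; try ring)
      · omega
    · intro j hj i i'
      rcases j with _|j
      · fin_cases i <;> fin_cases i' <;> solve | rfl | (simp [Matrix.vecHead, Matrix.vecTail]; try ring)
      · omega
end

section
/- Let n ≥ 4 and 2 ≤ r ≤ n−2, and let C be a multiset of r(n−r) integers. Then the number of distinct r × (n−r) fillings of C is at most the binomial coefficient C(r(n−r)−2, n−r−1). (Every filling of C has the same (1,1) entry — the minimum of C — and the same (r, n−r) entry — the maximum of C — and is uniquely determined by its entries in positions (1,2), …, (1, n−r).) -/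
/-- Cancellation lemma: shifted copies of a fixed nonempty multiset determine the shifts. -/
theorem aux_shift (R : Multiset ℤ) (hR : R ≠ 0) :
    ∀ (k : ℕ) (u v : ℕ → ℤ), Monotone u → Monotone v →
    (∑ i ∈ Finset.range k, R.map (· + u i)) = (∑ i ∈ Finset.range k, R.map (· + v i)) →
    ∀ i < k, u i = v i := by
  obtain ⟨a, haR, hamin⟩ : ∃ a ∈ R, ∀ b ∈ R, a ≤ b := by
    have h : R.toFinset.Nonempty := by
      rw [Multiset.toFinset_nonempty]; exact hR
    exact ⟨R.toFinset.min' h, Multiset.mem_toFinset.mp (R.toFinset.min'_mem h),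
      fun b hb => R.toFinset.min'_le b (Multiset.mem_toFinset.mpr hb)⟩
  intro k
  induction k with
  | zero => intro u v _ _ _ i hi; omega
  | succ k ih =>
    intro u v hu hv hsum i hik
    rw [Finset.sum_range_succ', Finset.sum_range_succ'] at hsum
    -- first show u 0 = v 0
    have key : ∀ (u v : ℕ → ℤ), Monotone u → Monotone v →
        ((∑ i ∈ Finset.range k, R.map (· + u (i + 1))) + R.map (· + u 0)
          = (∑ i ∈ Finset.range k, R.map (· + v (i + 1))) + R.map (· + v 0)) →
        v 0 ≤ u 0 := by
      intro u v hu hv hsum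
      have hmem : a + u 0 ∈ (∑ i ∈ Finset.range k, R.map (· + v (i + 1))) + R.map (· + v 0) := by
        rw [← hsum]
        exact Multiset.mem_add.mpr (Or.inr (Multiset.mem_map.mpr ⟨a, haR, rfl⟩))
      rcases Multiset.mem_add.mp hmem with h | h
      · obtain ⟨j, hj, hmem'⟩ := Multiset.mem_sum.mp h
        obtain ⟨b, hb, hba⟩ := Multiset.mem_map.mp hmem'
        have h1 : a ≤ b := hamin b hb
        have h2 : v 0 ≤ v (j + 1) := hv (by omega)
        omega
      · obtain ⟨b, hb, hba⟩ := Multiset.mem_map.mp h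
        have h1 : a ≤ b := hamin b hb
        omega
    have h0 : u 0 = v 0 :=
      le_antisymm (key v u hv hu hsum.symm) (key u v hu hv hsum)
    rcases Nat.eq_zero_or_pos i with rfl | hipos
    · exact h0
    · have hcancel : (∑ i ∈ Finset.range k, R.map (· + u (i + 1)))
          = ∑ i ∈ Finset.range k, R.map (· + v (i + 1)) := by
        have : R.map (· + u 0) = R.map (· + v 0) := by rw [h0]
        rw [this] at hsum
        exact add_right_cancel hsum
      have := ih (fun i => u (i + 1)) (fun i => v (i + 1))
        (fun x y hxy => hu (by omega)) (fun x y hxy => hv (by omega)) hcancel (i - 1) (by omega)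
      simpa [Nat.sub_add_cancel hipos] using this


/-- decomposition: each entry is first-row entry plus a column shift -/
theorem aux_decomp {r m : ℕ} [NeZero r] [NeZero m] {C : Multiset ℤ} {A : Matrix (Fin r) (Fin m) ℤ}
    (hA : IsFilling C A) (i : Fin r) (j : Fin m) :
    A i j = A 0 j + (A i 0 - A 0 0) := by
  obtain ⟨-, -, -, h4, -⟩ := hA
  obtain ⟨iv, hiv⟩ := i
  induction iv with
  | zero =>
    have : (⟨0, hiv⟩ : Fin r) = 0 := rfl
    rw [this]; ring
  | succ k ihk =>
    have hk : k < r := by omega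
    have h := h4 k hiv j 0
    have := ihk hk
    omega

theorem entries_row_sum {r m : ℕ} (A : Matrix (Fin r) (Fin m) ℤ) :
    ((Finset.univ : Finset (Fin r × Fin m)).val.map fun p => A p.1 p.2)
      = ∑ i : Fin r, (Finset.univ : Finset (Fin m)).val.map (A i) := by
  rw [← Finset.univ_product_univ, Finset.product_val]
  simp only [SProd.sprod, Multiset.product, Multiset.map_bind]
  rw [Multiset.bind, Multiset.join, Finset.sum_eq_multiset_sum]
  congr 1
  apply Multiset.map_congr rfl
  intro i _
  rw [Multiset.map_map]
  rfl

/-- a filling is determined by its first row -/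
theorem filling_unique {r m : ℕ} [NeZero r] [NeZero m] (hr : 2 ≤ r) (hm : 1 ≤ m)
    {C : Multiset ℤ} {A B : Matrix (Fin r) (Fin m) ℤ}
    (hA : IsFilling C A) (hB : IsFilling C B) (hrow : A 0 = B 0) : A = B := by
  set R : Multiset ℤ := (Finset.univ : Finset (Fin m)).val.map (A 0) with hR
  have hRne : R ≠ 0 := by
    intro h
    have := congrArg Multiset.card h
    simp [hR] at this
    omega
  set u : ℕ → ℤ := fun i => A ⟨min i (r - 1), by omega⟩ 0 - A 0 0 with hu
  set v : ℕ → ℤ := fun i => B ⟨min i (r - 1), by omega⟩ 0 - B 0 0 with hv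
  have hmono : ∀ (M : Matrix (Fin r) (Fin m) ℤ), IsFilling C M →
      Monotone (fun i : ℕ => M ⟨min i (r - 1), by omega⟩ 0 - M 0 0) := by
    intro M hM x y hxy
    have := hM.2.2.1 0 (show (⟨min x (r-1), by omega⟩ : Fin r) ≤ ⟨min y (r-1), by omega⟩ by
      simp [Fin.mk_le_mk]; omega)
    simpa using this
  have hrowsum : ∀ (M : Matrix (Fin r) (Fin m) ℤ), IsFilling C M → M 0 = A 0 →
      (∑ i ∈ Finset.range r, R.map
        (· + (M ⟨min i (r - 1), by omega⟩ 0 - M 0 0))) = C := by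
    intro M hM hM0
    have h1 : Filling.entries M = C := hM.1
    rw [Filling.entries, entries_row_sum] at h1
    rw [← h1]
    rw [← Fin.sum_univ_eq_sum_range (fun i =>
      R.map (· + (M ⟨min i (r - 1), by omega⟩ 0 - M 0 0))) r]
    apply Finset.sum_congr rfl
    intro i _
    have hmin : min (i : ℕ) (r - 1) = (i : ℕ) := by omega
    have : (⟨min (i : ℕ) (r - 1), by omega⟩ : Fin r) = i := by
      apply Fin.ext; simp [hmin]
    rw [this, hR, Multiset.map_map]
    apply Multiset.map_congr rfl
    intro j _
    have := aux_decomp hM i j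
    simp [Function.comp, ← hM0, this]
  have hAC := hrowsum A hA rfl
  have hBC := hrowsum B hB hrow.symm
  have heq := aux_shift R hRne r u v (hmono A hA) (hmono B hB) (by rw [hAC, hBC])
  funext i j
  rw [aux_decomp hA i j, aux_decomp hB i j]
  have h00 : A 0 0 = B 0 0 := congrFun hrow 0
  have hi := heq i (i.2)
  simp only [hu, hv] at hi
  have hmin : min (i : ℕ) (r - 1) = (i : ℕ) := by omega
  have hfin : (⟨min (i : ℕ) (r - 1), by omega⟩ : Fin r) = i := Fin.ext hmin
  rw [hfin] at hi
  rw [congrFun hrow j]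
  omega

/-- a monotone function on `Fin m` is determined by its value at 0 and the multiset of
its other values -/
theorem aux_row {m : ℕ} [NeZero m] (g h : Fin m → ℤ) (hg : Monotone g) (hh : Monotone h)
    (h0 : g 0 = h 0)
    (ht : ((Finset.univ.erase (0 : Fin m)).val.map g) = (Finset.univ.erase 0).val.map h) :
    g = h := by
  have hfull : ∀ f : Fin m → ℤ,
      (Finset.univ : Finset (Fin m)).val.map f = f 0 ::ₘ (Finset.univ.erase 0).val.map f := by
    intro f
    conv_lhs => rw [← Finset.insert_erase (Finset.mem_univ (0 : Fin m))]
    rw [Finset.insert_val_of_notMem (Finset.notMem_erase _ _), Multiset.map_cons]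
  have hfulleq : (Finset.univ : Finset (Fin m)).val.map g = Finset.univ.val.map h := by
    rw [hfull g, hfull h, h0, ht]
  set l := Finset.sort (Finset.univ : Finset (Fin m)) (· ≤ ·) with hl
  have hlcoe : (l : Multiset (Fin m)) = Finset.univ.val := Finset.sort_eq _ _
  have hperm : (l.map g).Perm (l.map h) := by
    rw [← Multiset.coe_eq_coe]
    show ((l : Multiset (Fin m)).map g) = (l : Multiset (Fin m)).map h
    rw [hlcoe]; exact hfulleq
  have hsortg : List.Pairwise (· ≤ ·) (l.map g) :=
    List.Pairwise.map g (fun a b hab => hg hab) (Finset.pairwise_sort _ _)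
  have hsorth : List.Pairwise (· ≤ ·) (l.map h) :=
    List.Pairwise.map h (fun a b hab => hh hab) (Finset.pairwise_sort _ _)
  have hleq := List.Perm.eq_of_pairwise' hsortg hsorth hperm
  funext j
  exact List.map_inj_left.mp hleq j (by rw [hl, Finset.mem_sort]; exact Finset.mem_univ j)

theorem aux_mem {r m : ℕ} {C : Multiset ℤ} {A : Matrix (Fin r) (Fin m) ℤ}
    (hA : IsFilling C A) (i : Fin r) (j : Fin m) : A i j ∈ C := by
  rw [← hA.1, Filling.entries]
  exact Multiset.mem_map.mpr ⟨(i, j), Finset.mem_val.mpr (Finset.mem_univ _), rfl⟩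

theorem aux_min {r m : ℕ} [NeZero r] [NeZero m] {C : Multiset ℤ}
    {A : Matrix (Fin r) (Fin m) ℤ} (hA : IsFilling C A) : ∀ x ∈ C, A 0 0 ≤ x := by
  intro x hx
  rw [← hA.1, Filling.entries] at hx
  obtain ⟨p, -, rfl⟩ := Multiset.mem_map.mp hx
  calc A 0 0 ≤ A p.1 0 := hA.2.2.1 0 (by rw [Fin.le_def]; simp)
    _ ≤ A p.1 p.2 := hA.2.1 p.1 (by rw [Fin.le_def]; simp)

theorem aux_max {r m : ℕ} (hr : 1 ≤ r) (hm : 1 ≤ m) {C : Multiset ℤ}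
    {A : Matrix (Fin r) (Fin m) ℤ} (hA : IsFilling C A) :
    ∀ x ∈ C, x ≤ A ⟨r - 1, by omega⟩ ⟨m - 1, by omega⟩ := by
  intro x hx
  rw [← hA.1, Filling.entries] at hx
  obtain ⟨p, -, rfl⟩ := Multiset.mem_map.mp hx
  calc A p.1 p.2 ≤ A ⟨r - 1, by omega⟩ p.2 := by
        apply hA.2.2.1 p.2
        rw [Fin.le_def]
        have := p.1.2
        simp
        omega
    _ ≤ A ⟨r - 1, by omega⟩ ⟨m - 1, by omega⟩ := by
        apply hA.2.1
        rw [Fin.le_def]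
        have := p.2.2
        simp
        omega


/-- for `n ≥ 4` and `2 ≤ r ≤ n - 2`, a multiset `C` of
`r(n-r)` integers has only finitely many `r × (n-r)` fillings, and their
number is at most the binomial coefficient `C(r(n-r) - 2, n-r-1)`. -/
theorem stmt17 (n r : ℕ) (hn : 4 ≤ n) (hr2 : 2 ≤ r) (hrn : r ≤ n - 2)
    (C : Multiset ℤ) (hC : Multiset.card C = r * (n - r)) :
    {A : Matrix (Fin r) (Fin (n - r)) ℤ | IsFilling C A}.Finite ∧
    {A : Matrix (Fin r) (Fin (n - r)) ℤ | IsFilling C A}.ncard ≤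
      Nat.choose (r * (n - r) - 2) (n - r - 1) := by
  have hm2 : 2 ≤ n - r := by omega
  haveI : NeZero r := ⟨by omega⟩
  haveI : NeZero (n - r) := ⟨by omega⟩
  have hCcard : 4 ≤ Multiset.card C := by
    rw [hC]
    calc 4 = 2 * 2 := rfl
    _ ≤ r * (n - r) := Nat.mul_le_mul hr2 hm2
  have hCne : C ≠ 0 := by
    intro h; rw [h] at hCcard; simp at hCcard
  have hCnef : C.toFinset.Nonempty := Multiset.toFinset_nonempty.mpr hCne
  set a := C.toFinset.min' hCnef with ha
  set b := C.toFinset.max' hCnef with hb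
  have haC : a ∈ C := Multiset.mem_toFinset.mp (Finset.min'_mem _ _)
  have hbC : b ∈ C := Multiset.mem_toFinset.mp (Finset.max'_mem _ _)
  have hamin : ∀ x ∈ C, a ≤ x := fun x hx => Finset.min'_le _ _ (Multiset.mem_toFinset.mpr hx)
  have hbmax : ∀ x ∈ C, x ≤ b := fun x hx => Finset.le_max' _ _ (Multiset.mem_toFinset.mpr hx)
  set D := (C.erase a).erase b with hD
  set s := {A : Matrix (Fin r) (Fin (n - r)) ℤ | IsFilling C A} with hs
  set f : Matrix (Fin r) (Fin (n - r)) ℤ → Multiset ℤ :=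
    fun A => ((Finset.univ.erase (0 : Fin (n - r))).val.map (A 0)) with hf
  set pm : Fin r := ⟨r - 1, by omega⟩ with hpm
  set pn : Fin (n - r) := ⟨n - r - 1, by omega⟩ with hpn
  -- every filling has minimum at (0,0) and maximum at (pm,pn)
  have hA00 : ∀ A ∈ s, A 0 0 = a := by
    intro A hA
    exact le_antisymm (aux_min hA a haC) (hamin _ (aux_mem hA 0 0))
  have hAmax : ∀ A ∈ s, A pm pn = b := by
    intro A hA
    exact le_antisymm (hbmax _ (aux_mem hA pm pn)) (aux_max (by omega) (by omega) hA b hbC)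
  -- full first row multiset
  have hfull : ∀ A : Matrix (Fin r) (Fin (n - r)) ℤ,
      (Finset.univ : Finset (Fin (n - r))).val.map (A 0) = A 0 0 ::ₘ f A := by
    intro A
    conv_lhs => rw [← Finset.insert_erase (Finset.mem_univ (0 : Fin (n - r)))]
    rw [Finset.insert_val_of_notMem (Finset.notMem_erase _ _), Multiset.map_cons]
  -- injectivity
  have hinj : Set.InjOn f s := by
    intro A hA B hB hfeq
    apply filling_unique hr2 (by omega) hA hB
    exact aux_row (A 0) (B 0) (hA.2.1 0) (hB.2.1 0)
      (by rw [hA00 A hA, hA00 B hB]) hfeq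
  -- image lands in powersetCard
  have hmem : ∀ A ∈ s, f A ∈ Multiset.powersetCard (n - r - 1) D := by
    intro A hA
    rw [Multiset.mem_powersetCard]
    constructor
    · -- f A ≤ D
      set P : Finset (Fin r × Fin (n - r)) :=
        insert (pm, pn) (Finset.image (fun j => ((0 : Fin r), j)) Finset.univ) with hP
      have hnotmem : (pm, pn) ∉ Finset.image (fun j => ((0 : Fin r), j))
          (Finset.univ : Finset (Fin (n - r))) := by
        intro h
        obtain ⟨j, -, hj⟩ := Finset.mem_image.mp h
        have h1 : (0 : Fin r) = pm := congrArg Prod.fst hj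
        have h2 : (0 : ℕ) = r - 1 := congrArg Fin.val h1
        omega
      have hPval : P.val = (pm, pn) ::ₘ
          (Finset.image (fun j => ((0 : Fin r), j)) Finset.univ).val :=
        Finset.insert_val_of_notMem hnotmem
      have himgval : (Finset.image (fun j => ((0 : Fin r), j))
          (Finset.univ : Finset (Fin (n - r)))).val
          = Finset.univ.val.map (fun j => ((0 : Fin r), j)) := by
        apply Finset.image_val_of_injOn
        intro x _ y _ hxy
        exact (Prod.mk.injEq _ _ _ _ ▸ hxy).2
      have hPle : P.val ≤ (Finset.univ : Finset (Fin r × Fin (n - r))).val :=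
        Finset.val_le_iff.mpr (Finset.subset_univ P)
      have hmaple := Multiset.map_le_map (f := fun p : Fin r × Fin (n - r) => A p.1 p.2) hPle
      have hentries : ((Finset.univ : Finset (Fin r × Fin (n - r))).val.map
          fun p => A p.1 p.2) = C := hA.1
      rw [hentries, hPval, Multiset.map_cons, himgval, Multiset.map_map] at hmaple
      have hrowmap : (Finset.univ.val.map
          ((fun p : Fin r × Fin (n - r) => A p.1 p.2) ∘ fun j => ((0 : Fin r), j)))
          = A 0 0 ::ₘ f A := by
        rw [← hfull A]; rfl
      rw [hrowmap, hAmax A hA] at hmaple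
      have h1 : A 0 0 ::ₘ b ::ₘ f A ≤ C := by rwa [Multiset.cons_swap]
      have h2 : b ::ₘ f A ≤ C.erase (A 0 0) := by
        have := Multiset.erase_le_erase (A 0 0) h1
        rwa [Multiset.erase_cons_head] at this
      rw [hA00 A hA] at h2
      have h3 : f A ≤ D := by
        have := Multiset.erase_le_erase b h2
        rwa [Multiset.erase_cons_head] at this
      exact h3
    · -- card
      rw [Multiset.card_map]
      have : ((Finset.univ : Finset (Fin (n - r))).erase 0).card = n - r - 1 := by
        rw [Finset.card_erase_of_mem (Finset.mem_univ _), Finset.card_univ, Fintype.card_fin]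
      rw [← this]
      rfl
  set T := (Multiset.powersetCard (n - r - 1) D).toFinset with hT
  have himg : f '' s ⊆ ↑T := by
    rintro x ⟨A, hA, rfl⟩
    exact Multiset.mem_toFinset.mpr (hmem A hA)
  have hfin : s.Finite :=
    Set.Finite.of_finite_image (Set.Finite.subset T.finite_toSet himg) hinj
  refine ⟨hfin, ?_⟩
  have hbea : b ∈ C.erase a := by
    rcases eq_or_ne b a with heq | hne
    · have hall : ∀ x ∈ C, a = x := fun x hx =>
        le_antisymm (hamin x hx) (heq ▸ hbmax x hx)
      have hcount : Multiset.count a C = Multiset.card C := Multiset.count_eq_card.mpr hall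
      rw [heq]
      rw [← Multiset.count_pos, Multiset.count_erase_self, hcount]
      omega
    · exact Multiset.mem_erase_of_ne hne |>.mpr hbC
  have hDcard : Multiset.card D = r * (n - r) - 2 := by
    rw [hD, Multiset.card_erase_of_mem hbea, Multiset.card_erase_of_mem haC, hC]
    simp only [Nat.pred_eq_sub_one]
    omega
  calc s.ncard = (f '' s).ncard := (Set.ncard_image_of_injOn hinj).symm
    _ ≤ (↑T : Set (Multiset ℤ)).ncard := Set.ncard_le_ncard himg T.finite_toSet
    _ = T.card := Set.ncard_coe_finset T
    _ ≤ Multiset.card (Multiset.powersetCard (n - r - 1) D) := Multiset.toFinset_card_le _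
    _ = (Multiset.card D).choose (n - r - 1) := Multiset.card_powersetCard _ _
    _ = Nat.choose (r * (n - r) - 2) (n - r - 1) := by rw [hDcard]
end
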